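/- arXiv:1904.03462 — 8 statements merged into one kernel-verified Lean document; each statement's English description precedes it below -/
import Mathlib

section
/- Let ρ_- > 0 and u_- > u_+. For γ ∈ (0,1) define ρ_*(γ) = (u_- - u_+ + ρ_-^γ)^{1/γ} and the shock speed σ_1(γ) = u_+ - ρ_-(u_- - u_+)/(ρ_*(γ) - ρ_-). Then lim_{γ→0+} σ_1(γ) = u_+, i.e. the 1-shock speed σ_1, the contact-discontinuity speed σ_2 = u_+ and the intermediate velocity u_* = u_+ all have the common limit u_+ as γ → 0+. -/
/-!
As `γ → 0+` the base `u_- - u_+ + ρ_-^γ` of `ρ_*(γ)` tends to `u_- - u_+ + 1 > 1`, so raising it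
to the power `1/γ → ∞` sends `ρ_*(γ)` to infinity; the correction term
`ρ_-(u_- - u_+)/(ρ_*(γ) - ρ_-)` in `σ_1(γ)` therefore vanishes.
-/

open Filter Topology

/-- The intermediate density of the Aw–Rascle Riemann solution:
`ρ_*(γ) = (u_- - u_+ + ρ_-^γ)^(1/γ)`. -/
noncomputable def rhoStar (ρm um up γ : ℝ) : ℝ := (um - up + ρm ^ γ) ^ (1 / γ)

/-- The 1-shock speed `σ_1(γ) = u_+ - ρ_-(u_- - u_+)/(ρ_*(γ) - ρ_-)`. -/
noncomputable def sigma1 (ρm um up γ : ℝ) : ℝ :=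
  up - ρm * (um - up) / (rhoStar ρm um up γ - ρm)

theorem Filter.Tendsto.rpow_one_div_nhdsGT_zero_atTop {f : ℝ → ℝ} {L : ℝ}
    (hf : Tendsto f (𝓝[>] 0) (𝓝 L)) (hL : 1 < L) :
    Tendsto (fun γ => f γ ^ (1 / γ)) (𝓝[>] 0) atTop := by
  obtain ⟨b, hb1, hbL⟩ := exists_between hL
  have hpow : Tendsto (fun γ : ℝ => b ^ (1 / γ)) (𝓝[>] 0) atTop := by
    simpa only [one_div, Function.comp_def] using
      (tendsto_rpow_atTop_of_base_gt_one b hb1).comp tendsto_inv_nhdsGT_zero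
  refine tendsto_atTop_mono' _ ?_ hpow
  filter_upwards [hf.eventually (eventually_ge_nhds hbL), self_mem_nhdsWithin]
    with γ hbf (hγ : 0 < γ)
  exact Real.rpow_le_rpow (by linarith) hbf (by positivity)

theorem tendsto_rhoStar_atTop {ρm um up : ℝ} (hρm : 0 < ρm) (hu : up < um) :
    Tendsto (rhoStar ρm um up) (𝓝[>] 0) atTop := by
  have hbase : Tendsto (fun γ : ℝ => um - up + ρm ^ γ) (𝓝[>] 0) (𝓝 (um - up + 1)) := by
    have hcont : ContinuousAt (fun γ : ℝ => ρm ^ γ) 0 :=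
      Real.continuousAt_const_rpow hρm.ne'
    simpa using tendsto_const_nhds.add (hcont.tendsto.mono_left nhdsWithin_le_nhds)
  exact hbase.rpow_one_div_nhdsGT_zero_atTop (by linarith)

theorem tendsto_sigma1 {ρm um up : ℝ} (hρm : 0 < ρm) (hu : up < um) :
    Tendsto (sigma1 ρm um up) (𝓝[>] 0) (𝓝 up) := by
  have hcorr : Tendsto (fun γ => ρm * (um - up) / (rhoStar ρm um up γ - ρm)) (𝓝[>] 0) (𝓝 0) :=
    tendsto_const_nhds.div_atTop
      (tendsto_atTop_add_const_right _ _ (tendsto_rhoStar_atTop hρm hu))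
  have h := (tendsto_const_nhds (x := up)).sub hcorr
  rw [sub_zero] at h
  exact h

theorem stmt1_general (ρm um up : ℝ) (hρm : 0 < ρm) (hu : up < um) :
    Tendsto (fun γ : ℝ => sigma1 ρm um up γ) (𝓝[>] 0) (𝓝 up) ∧
    Tendsto (fun _ : ℝ => up) (𝓝[>] 0) (𝓝 up) ∧
    Tendsto (fun _ : ℝ => up) (𝓝[>] 0) (𝓝 up) :=
  ⟨tendsto_sigma1 hρm hu, tendsto_const_nhds, tendsto_const_nhds⟩

/-- For `ρ_- > 0`, `ρ_+ > 0`, `u_- > u_+`: as `γ → 0+` the 1-shock speed `σ_1(γ)`,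
the contact discontinuity speed `σ_2 = u_+` and the intermediate velocity `u_* = u_+`
all tend to the common limit `u_+`. -/
theorem stmt1 (ρm ρp um up : ℝ) (hρm : 0 < ρm) (hρp : 0 < ρp) (hu : up < um) :
    Tendsto (fun γ : ℝ => sigma1 ρm um up γ) (𝓝[>] 0) (𝓝 up) ∧
    Tendsto (fun _ : ℝ => up) (𝓝[>] 0) (𝓝 up) ∧
    Tendsto (fun _ : ℝ => up) (𝓝[>] 0) (𝓝 up) :=
  stmt1_general ρm um up hρm hu
end

section
/- For every smooth compactly supported test function φ : ℝ → ℝ, lim_{γ→0+} ∫_ℝ (ρ_γ(ξ) − ρ_0(ξ)) φ(ξ) dξ = ρ_-(u_- − u_+) φ(u_+), i.e. the density of the Aw–Rascle Riemann solution converges in the sense of distributions to ρ_0 plus a Dirac measure at ξ = u_+ with weight ρ_-(u_- − u_+) = u_+(ρ_+ − ρ_-) − (ρ_+u_+ − ρ_-u_-). -/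
open Filter Topology MeasureTheory

/-- The density of the self-similar Aw–Rascle Riemann solution:
`ρ_γ(ξ) = ρ_-` for `ξ < σ_1(γ)`, `= ρ_*(γ)` for `σ_1(γ) < ξ < σ_2 = u_+`,
`= ρ_+` for `ξ > σ_2`. -/
noncomputable def rhoAR (ρm ρp um up γ ξ : ℝ) : ℝ :=
  if ξ < sigma1 ρm um up γ then ρm else if ξ < up then rhoStar ρm um up γ else ρp

/-- The limiting step density `ρ_0(ξ) = ρ_-` for `ξ < u_+`, `= ρ_+` for `ξ > u_+`. -/
noncomputable def rhoZero (ρm ρp up ξ : ℝ) : ℝ := if ξ < up then ρm else ρp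

lemma rhoStar_gt (ρm um up : ℝ) (hρm : 0 < ρm) (hu : up < um) {γ : ℝ} (hγ : 0 < γ) :
    ρm < rhoStar ρm um up γ := by
  have hx : ρm ^ γ < um - up + ρm ^ γ := by linarith
  have h1 : (ρm ^ γ) ^ (1 / γ) < (um - up + ρm ^ γ) ^ (1 / γ) :=
    Real.rpow_lt_rpow (Real.rpow_nonneg hρm.le γ) hx (by positivity)
  have h2 : (ρm ^ γ) ^ (1 / γ) = ρm := by
    rw [← Real.rpow_mul hρm.le, mul_one_div_cancel hγ.ne', Real.rpow_one]
  rw [rhoStar]; linarith [h1, h2.symm.le]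

lemma sigma1_lt (ρm um up : ℝ) (hρm : 0 < ρm) (hu : up < um) {γ : ℝ} (hγ : 0 < γ) :
    sigma1 ρm um up γ < up := by
  have hR := rhoStar_gt ρm um up hρm hu hγ
  have hd : 0 < ρm * (um - up) / (rhoStar ρm um up γ - ρm) := by
    apply div_pos (by nlinarith) (by linarith)
  rw [sigma1]; linarith

/-- For every smooth compactly supported test function `φ`,
`lim_{γ→0+} ∫_ℝ (ρ_γ(ξ) − ρ_0(ξ)) φ(ξ) dξ = ρ_-(u_- − u_+) φ(u_+)`, i.e. the density
converges in the sense of distributions to `ρ_0` plus a Dirac measure at `ξ = u_+`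
with weight `ρ_-(u_- − u_+) = u_+(ρ_+ − ρ_-) − (ρ_+u_+ − ρ_-u_-)`. -/
theorem stmt3 (ρm ρp um up : ℝ) (hρm : 0 < ρm) (hρp : 0 < ρp) (hu : up < um) :
    (∀ φ : ℝ → ℝ, ContDiff ℝ (⊤ : ℕ∞) φ → HasCompactSupport φ →
      Tendsto (fun γ : ℝ => ∫ ξ : ℝ, (rhoAR ρm ρp um up γ ξ - rhoZero ρm ρp up ξ) * φ ξ)
        (𝓝[>] 0) (𝓝 (ρm * (um - up) * φ up))) ∧
    ρm * (um - up) = up * (ρp - ρm) - (ρp * up - ρm * um) := by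
  constructor
  · intro φ hφ hsupp
    have hc : Continuous φ := hφ.continuous
    -- the primitive of φ based at up
    set F : ℝ → ℝ := fun a => ∫ t in up..a, φ t with hF_def
    have hF : HasDerivAt F (φ up) up :=
      intervalIntegral.integral_hasDerivAt_right (hc.intervalIntegrable up up)
        (hc.stronglyMeasurableAtFilter _ _) hc.continuousAt
    have hslope : Tendsto (slope F up) (𝓝[≠] up) (𝓝 (φ up)) :=
      hasDerivAt_iff_tendsto_slope.mp hF
    -- rhoStar tends to atTop
    have hx : Tendsto (fun γ : ℝ => um - up + ρm ^ γ) (𝓝[>] 0) (𝓝 (um - up + 1)) := by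
      have h1 : Tendsto (fun γ : ℝ => ρm ^ γ) (𝓝 0) (𝓝 1) := by
        simpa using (Real.continuousAt_const_rpow (b := 0) hρm.ne').tendsto
      have h2 : Tendsto (fun γ : ℝ => um - up + ρm ^ γ) (𝓝 0) (𝓝 (um - up + 1)) :=
        tendsto_const_nhds.add h1
      exact h2.mono_left nhdsWithin_le_nhds
    have hlog : Tendsto (fun γ : ℝ => Real.log (um - up + ρm ^ γ)) (𝓝[>] 0)
        (𝓝 (Real.log (um - up + 1))) :=
      (Real.continuousAt_log (by linarith)).tendsto.comp hx
    have hlogpos : 0 < Real.log (um - up + 1) := Real.log_pos (by linarith)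
    have hinv : Tendsto (fun γ : ℝ => 1 / γ) (𝓝[>] 0) atTop := by
      simpa [one_div] using tendsto_inv_nhdsGT_zero (𝕜 := ℝ)
    have hmul : Tendsto (fun γ : ℝ => (1 / γ) * Real.log (um - up + ρm ^ γ)) (𝓝[>] 0) atTop :=
      Tendsto.atTop_mul_pos hlogpos hinv hlog
    have hR : Tendsto (fun γ : ℝ => rhoStar ρm um up γ) (𝓝[>] 0) atTop := by
      apply Tendsto.congr' _ (Real.tendsto_exp_atTop.comp hmul)
      filter_upwards [self_mem_nhdsWithin] with γ (hγ : 0 < γ)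
      have hXpos : 0 < um - up + ρm ^ γ := by
        have := Real.rpow_pos_of_pos hρm γ; linarith
      simp only [Function.comp_apply, rhoStar]
      rw [Real.rpow_def_of_pos hXpos, mul_comm]
    have hRm : Tendsto (fun γ : ℝ => rhoStar ρm um up γ - ρm) (𝓝[>] 0) atTop :=
      tendsto_atTop_add_const_right _ _ hR
    have hσ : Tendsto (fun γ : ℝ => sigma1 ρm um up γ) (𝓝[>] 0) (𝓝 up) := by
      have h0 : Tendsto (fun γ : ℝ => ρm * (um - up) / (rhoStar ρm um up γ - ρm)) (𝓝[>] 0)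
          (𝓝 0) := tendsto_const_nhds.div_atTop hRm
      have := (tendsto_const_nhds (α := ℝ) (x := up)).sub h0
      simpa [sigma1] using this
    have hσne : Tendsto (fun γ : ℝ => sigma1 ρm um up γ) (𝓝[>] 0) (𝓝[≠] up) := by
      rw [tendsto_nhdsWithin_iff]
      refine ⟨hσ, ?_⟩
      filter_upwards [self_mem_nhdsWithin] with γ (hγ : 0 < γ)
      exact (sigma1_lt ρm um up hρm hu hγ).ne
    have key : Tendsto (fun γ : ℝ => ρm * (um - up) * slope F up (sigma1 ρm um up γ))
        (𝓝[>] 0) (𝓝 (ρm * (um - up) * φ up)) :=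
      (hslope.comp hσne).const_mul _
    apply key.congr'
    filter_upwards [self_mem_nhdsWithin] with γ (hγ : 0 < γ)
    set s := sigma1 ρm um up γ with hs_def
    set R := rhoStar ρm um up γ with hR_def
    have hslt : s < up := sigma1_lt ρm um up hρm hu hγ
    have hRgt : ρm < R := rhoStar_gt ρm um up hρm hu hγ
    -- integral equals (R - ρm) * ∫ s..up φ
    have hind : (fun ξ => (rhoAR ρm ρp um up γ ξ - rhoZero ρm ρp up ξ) * φ ξ)
        = (Set.Ico s up).indicator (fun ξ => (R - ρm) * φ ξ) := by
      funext ξ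
      by_cases h1 : ξ < s
      · have h2 : ξ < up := h1.trans hslt
        simp [rhoAR, rhoZero, Set.indicator_apply, h1, h2, ← hs_def, not_le.mpr h1]
      · by_cases h2 : ξ < up
        · simp [rhoAR, rhoZero, Set.indicator_apply, h1, h2, ← hs_def, ← hR_def,
            not_lt.mp h1]
        · simp [rhoAR, rhoZero, Set.indicator_apply, h1, h2, ← hs_def]
    have hint : (∫ ξ : ℝ, (rhoAR ρm ρp um up γ ξ - rhoZero ρm ρp up ξ) * φ ξ)
        = (R - ρm) * ∫ t in s..up, φ t := by
      rw [hind, integral_indicator measurableSet_Ico,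
        MeasureTheory.integral_Ico_eq_integral_Ioo,
        ← MeasureTheory.integral_Ioc_eq_integral_Ioo,
        ← intervalIntegral.integral_of_le hslt.le, intervalIntegral.integral_const_mul]
    rw [hint]
    -- compute the slope
    have hFup : F up = 0 := intervalIntegral.integral_same
    have hFs : F s = -∫ t in s..up, φ t := intervalIntegral.integral_symm _ _
    have hups : up - s = ρm * (um - up) / (R - ρm) := by
      rw [hs_def, sigma1, ← hR_def]; ring
    have hRmne : R - ρm ≠ 0 := by linarith
    have h2 : (R - ρm) * (up - s) = ρm * (um - up) := by
      rw [hups]; field_simp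
    have hslope_eq : slope F up s = (∫ t in s..up, φ t) / (up - s) := by
      rw [slope_def_field, hFup, hFs]
      rw [div_eq_div_iff (by linarith) (by linarith)]
      ring
    rw [hslope_eq]
    have hupsne : up - s ≠ 0 := by linarith
    rw [← h2]
    field_simp
  · ring
end

section
/- Let 1 < γ < 3, ρ_- > 0 and u_- > 0, and define u(ρ) = (√u_- + √(ρ_-^{γ−1}/(γ−1)) − √(ρ^{γ−1}/(γ−1)))² for 0 < ρ ≤ ρ_-. Then u is strictly decreasing and strictly convex on (0, ρ_-], its derivative satisfies u′(ρ) = −√((γ−1)ρ^{γ−3}u(ρ)), and lim_{ρ→0+} u(ρ) = (√u_- + √(ρ_-^{γ−1}/(γ−1)))². -/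
open Filter Topology

/-- The parametrization of the 1-rarefaction curve of the perturbed Aw–Rascle system:
`u(ρ) = (√u_- + √(ρ_-^{γ−1}/(γ−1)) − √(ρ^{γ−1}/(γ−1)))²`. -/
noncomputable def uR1 (γ ρm um ρ : ℝ) : ℝ :=
  (Real.sqrt um + Real.sqrt (ρm ^ (γ - 1) / (γ - 1))
    - Real.sqrt (ρ ^ (γ - 1) / (γ - 1))) ^ 2

/-- For `1 < γ < 3`, `ρ_- > 0`, `u_- > 0`: the 1-rarefaction curve `u(ρ)` is strictly
decreasing and strictly convex on `(0, ρ_-]`, its derivative is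
`u′(ρ) = −√((γ−1)ρ^{γ−3}u(ρ))`, and `u(ρ) → (√u_- + √(ρ_-^{γ−1}/(γ−1)))²` as `ρ → 0+`. -/
theorem stmt10 (γ ρm um : ℝ) (hγ1 : 1 < γ) (hγ3 : γ < 3) (hρ : 0 < ρm) (hu : 0 < um) :
    StrictAntiOn (uR1 γ ρm um) (Set.Ioc 0 ρm) ∧
    StrictConvexOn ℝ (Set.Ioc 0 ρm) (uR1 γ ρm um) ∧
    (∀ ρ ∈ Set.Ioc (0 : ℝ) ρm,
      HasDerivAt (uR1 γ ρm um)
        (-Real.sqrt ((γ - 1) * ρ ^ (γ - 3) * uR1 γ ρm um ρ)) ρ) ∧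
    Tendsto (uR1 γ ρm um) (𝓝[>] 0)
      (𝓝 ((Real.sqrt um + Real.sqrt (ρm ^ (γ - 1) / (γ - 1))) ^ 2)) := by
  have hγ0 : (0:ℝ) < γ - 1 := by linarith
  set s : ℝ := Real.sqrt (γ - 1) with hs
  have hs0 : 0 < s := Real.sqrt_pos.mpr hγ0
  have hss : s * s = γ - 1 := Real.mul_self_sqrt hγ0.le
  set β : ℝ := (γ - 1) / 2 with hβ
  have hβ0 : 0 < β := by positivity
  have hβ1 : β - 1 < 0 := by rw [hβ]; linarith
  set c : ℝ := Real.sqrt um + Real.sqrt (ρm ^ (γ - 1) / (γ - 1)) with hc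
  -- the basic rewrite of the square root term
  have hg : ∀ x : ℝ, 0 ≤ x → Real.sqrt (x ^ (γ - 1) / (γ - 1)) = x ^ β / s := by
    intro x hx
    rw [Real.sqrt_div (Real.rpow_nonneg hx _), Real.sqrt_eq_rpow, ← Real.rpow_mul hx]
    rw [mul_one_div]
  have key : ∀ x : ℝ, 0 ≤ x → uR1 γ ρm um x = (c - x ^ β / s) ^ 2 := by
    intro x hx
    simp only [uR1, hg x hx, hc]
  -- positivity of c - x^β/s on the interval
  have hcg : ∀ x ∈ Set.Ioc (0:ℝ) ρm, Real.sqrt um ≤ c - x ^ β / s := by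
    intro x hx
    have h2 : x ^ β / s ≤ ρm ^ β / s :=
      div_le_div_of_nonneg_right (Real.rpow_le_rpow hx.1.le hx.2 hβ0.le) hs0.le
    have h3 : c = Real.sqrt um + ρm ^ β / s := by rw [hc, hg ρm hρ.le]
    linarith
  have hcg0 : ∀ x ∈ Set.Ioc (0:ℝ) ρm, 0 < c - x ^ β / s := fun x hx =>
    lt_of_lt_of_le (Real.sqrt_pos.mpr hu) (hcg x hx)
  -- derivative in convenient form
  have hderiv : ∀ x : ℝ, 0 < x →
      HasDerivAt (uR1 γ ρm um) (-(s * x ^ (β - 1) * (c - x ^ β / s))) x := by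
    intro x hx
    have h1 : HasDerivAt (fun y : ℝ => c - y ^ β / s) (-(β * x ^ (β - 1) / s)) x :=
      ((Real.hasDerivAt_rpow_const (p := β) (Or.inl hx.ne')).div_const s).const_sub c
    have h2 := h1.pow 2
    have heq : uR1 γ ρm um =ᶠ[𝓝 x] fun y => (c - y ^ β / s) ^ 2 := by
      filter_upwards [eventually_gt_nhds hx] with y hy
      exact key y hy.le
    have h3 := h2.congr_of_eventuallyEq heq
    refine h3.congr_deriv ?_
    have hβs : β = s * s / 2 := by rw [hss]
    rw [hβs]
    field_simp
    have hs1 : s * s⁻¹ = 1 := mul_inv_cancel₀ hs0.ne'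
    linear_combination (2 * x ^ (s ^ 2 / 2) - 2 * s * c) * hs1
  -- the derivative equals the claimed formula
  have hsqrt : ∀ x ∈ Set.Ioc (0:ℝ) ρm,
      Real.sqrt ((γ - 1) * x ^ (γ - 3) * uR1 γ ρm um x)
        = s * x ^ (β - 1) * (c - x ^ β / s) := by
    intro x hx
    have hx0 : (0:ℝ) < x := hx.1
    have hA : (γ - 1) * x ^ (γ - 3) = (s * x ^ (β - 1)) ^ 2 := by
      rw [mul_pow, ← Real.rpow_natCast (x ^ (β - 1)) 2, ← Real.rpow_mul hx0.le]
      have h1 : (β - 1) * (2:ℕ) = γ - 3 := by rw [hβ]; push_cast; ring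
      rw [h1, sq, hss]
    rw [key x hx0.le, hA, ← mul_pow]
    exact Real.sqrt_sq (mul_nonneg (by positivity) (hcg0 x hx).le)
  -- strict antitonicity
  have hanti : StrictAntiOn (uR1 γ ρm um) (Set.Ioc 0 ρm) := by
    intro x hx y hy hxy
    rw [key x hx.1.le, key y hy.1.le]
    have h1 : x ^ β < y ^ β := Real.rpow_lt_rpow hx.1.le hxy hβ0
    have h2 : c - y ^ β / s < c - x ^ β / s :=
      sub_lt_sub_left ((div_lt_div_iff_of_pos_right hs0).mpr h1) c
    have h3 : 0 < c - y ^ β / s := hcg0 y hy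
    exact pow_lt_pow_left₀ h2 h3.le (by norm_num)
  -- derivative statement
  have hderiv' : ∀ ρ ∈ Set.Ioc (0:ℝ) ρm,
      HasDerivAt (uR1 γ ρm um)
        (-Real.sqrt ((γ - 1) * ρ ^ (γ - 3) * uR1 γ ρm um ρ)) ρ := by
    intro x hx
    rw [hsqrt x hx]
    exact hderiv x hx.1
  -- strict convexity
  have hconv : StrictConvexOn ℝ (Set.Ioc 0 ρm) (uR1 γ ρm um) := by
    apply StrictMonoOn.strictConvexOn_of_deriv (convex_Ioc _ _)
    · intro x hx
      exact ((hderiv x hx.1).continuousAt).continuousWithinAt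
    · rw [interior_Ioc]
      intro x hx y hy hxy
      rw [(hderiv x hx.1).deriv, (hderiv y hy.1).deriv]
      have hxm : x ∈ Set.Ioc (0:ℝ) ρm := ⟨hx.1, hx.2.le⟩
      have hym : y ∈ Set.Ioc (0:ℝ) ρm := ⟨hy.1, hy.2.le⟩
      have h1 : y ^ (β - 1) < x ^ (β - 1) :=
        Real.rpow_lt_rpow_of_neg hx.1 hxy hβ1
      have h2 : c - y ^ β / s ≤ c - x ^ β / s :=
        sub_le_sub_left (div_le_div_of_nonneg_right
          (Real.rpow_le_rpow hx.1.le hxy.le hβ0.le) hs0.le) c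
      have h3 : 0 < c - y ^ β / s := hcg0 y hym
      have h4 : s * y ^ (β - 1) * (c - y ^ β / s)
          < s * x ^ (β - 1) * (c - x ^ β / s) := by
        apply mul_lt_mul (by nlinarith) h2 h3 (mul_nonneg hs0.le (Real.rpow_nonneg hx.1.le _))
      linarith
  -- the limit
  have hlim : Tendsto (uR1 γ ρm um) (𝓝[>] 0) (𝓝 (c ^ 2)) := by
    have h1 : ContinuousAt (fun x : ℝ => x ^ (γ - 1)) 0 :=
      Real.continuousAt_rpow_const 0 (γ - 1) (Or.inr hγ0.le)
    have h2 : ContinuousAt (uR1 γ ρm um) 0 := by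
      unfold uR1
      fun_prop  -- may fail; fallback below
    have h3 : uR1 γ ρm um 0 = c ^ 2 := by
      simp [uR1, Real.zero_rpow hγ0.ne', hc]
    have := h2.tendsto
    rw [h3] at this
    exact this.mono_left nhdsWithin_le_nhds
  exact ⟨hanti, hconv, hderiv', hlim⟩
end

section
/- Let 1 < γ < 3, ρ_- > 0 and u_- > 0, and define u(ρ) = (√u_- + √(ρ^{γ−1}/(γ−1)) − √(ρ_-^{γ−1}/(γ−1)))² for ρ ≥ ρ_-. Then u is strictly increasing on [ρ_-, ∞), its derivative satisfies u′(ρ) = √((γ−1)ρ^{γ−3}u(ρ)), and lim_{ρ→+∞} u(ρ) = +∞. -/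
open Filter Topology

/-- The parametrization of the 2-rarefaction curve of the perturbed Aw–Rascle system:
`u(ρ) = (√u_- + √(ρ^{γ−1}/(γ−1)) − √(ρ_-^{γ−1}/(γ−1)))²`. -/
noncomputable def uR2 (γ ρm um ρ : ℝ) : ℝ :=
  (Real.sqrt um + Real.sqrt (ρ ^ (γ - 1) / (γ - 1))
    - Real.sqrt (ρm ^ (γ - 1) / (γ - 1))) ^ 2

/-- For `1 < γ < 3`, `ρ_- > 0`, `u_- > 0`: the 2-rarefaction curve `u(ρ)` is strictly
increasing on `[ρ_-, ∞)`, its derivative is `u′(ρ) = √((γ−1)ρ^{γ−3}u(ρ))`, and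
`u(ρ) → +∞` as `ρ → +∞`. -/
theorem stmt11 (γ ρm um : ℝ) (hγ1 : 1 < γ) (hγ3 : γ < 3) (hρ : 0 < ρm) (hu : 0 < um) :
    StrictMonoOn (uR2 γ ρm um) (Set.Ici ρm) ∧
    (∀ ρ ∈ Set.Ici ρm,
      HasDerivAt (uR2 γ ρm um)
        (Real.sqrt ((γ - 1) * ρ ^ (γ - 3) * uR2 γ ρm um ρ)) ρ) ∧
    Tendsto (uR2 γ ρm um) atTop atTop := by
  have hγ1' : (0:ℝ) < γ - 1 := by linarith
  set p : ℝ := (γ - 1) / 2 with hp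
  have hp0 : 0 < p := by positivity
  set s : ℝ := Real.sqrt (γ - 1) with hs
  have hs0 : 0 < s := Real.sqrt_pos.mpr hγ1'
  have hss : s * s = γ - 1 := Real.mul_self_sqrt hγ1'.le
  set B : ℝ := Real.sqrt (ρm ^ (γ - 1) / (γ - 1)) with hB
  set h : ℝ → ℝ := fun ρ => Real.sqrt um - B + ρ ^ p / s with hh
  have hsr : ∀ x r : ℝ, 0 ≤ x → Real.sqrt (x ^ r) = x ^ (r / 2) := by
    intro x r hx
    rw [Real.sqrt_eq_rpow, ← Real.rpow_mul hx]
    congr 1; ring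
  have key : ∀ ρ : ℝ, 0 < ρ → uR2 γ ρm um ρ = (h ρ) ^ 2 := by
    intro ρ hρ0
    have e : Real.sqrt (ρ ^ (γ - 1) / (γ - 1)) = ρ ^ p / s := by
      rw [Real.sqrt_div (Real.rpow_nonneg hρ0.le _), hsr ρ _ hρ0.le]
    simp only [uR2, hh, e]
    ring
  have hBval : B = ρm ^ p / s := by
    rw [hB, Real.sqrt_div (Real.rpow_nonneg hρ.le _), hsr ρm _ hρ.le]
  have hpos : ∀ ρ ∈ Set.Ici ρm, Real.sqrt um ≤ h ρ := by
    intro ρ hρ'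
    have h1 : ρm ^ p ≤ ρ ^ p := Real.rpow_le_rpow hρ.le hρ' hp0.le
    have h2 : ρm ^ p / s ≤ ρ ^ p / s := by gcongr
    rw [hh]; dsimp only; rw [hBval]; linarith
  have hmono : StrictMonoOn (uR2 γ ρm um) (Set.Ici ρm) := by
    intro a ha b hb hab
    have ha0 : 0 < a := lt_of_lt_of_le hρ ha
    have hb0 : 0 < b := lt_of_lt_of_le hρ hb
    rw [key a ha0, key b hb0]
    have hab' : h a < h b := by
      have h1 : a ^ p < b ^ p := Real.rpow_lt_rpow ha0.le hab hp0
      have h2 : a ^ p / s < b ^ p / s := by gcongr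
      rw [hh]; dsimp only; linarith
    exact pow_lt_pow_left₀ hab' (le_trans (Real.sqrt_nonneg um) (hpos a ha)) two_ne_zero
  refine ⟨hmono, ?_, ?_⟩
  · intro ρ hρ'
    have hρ0 : 0 < ρ := lt_of_lt_of_le hρ hρ'
    have hd0 : HasDerivAt (fun x : ℝ => x ^ p) (p * ρ ^ (p - 1)) ρ :=
      Real.hasDerivAt_rpow_const (Or.inl hρ0.ne')
    have hd1 : HasDerivAt h (p * ρ ^ (p - 1) / s) ρ := ((hd0.div_const s).const_add _)
    have hd2 : HasDerivAt (fun x => h x ^ 2) (2 * h ρ ^ 1 * (p * ρ ^ (p - 1) / s)) ρ := hd1.pow 2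
    have heq : uR2 γ ρm um =ᶠ[nhds ρ] fun x => h x ^ 2 := by
      filter_upwards [IsOpen.eventually_mem isOpen_Ioi hρ0] with x hx using key x hx
    have hd3 : HasDerivAt (uR2 γ ρm um) (2 * h ρ ^ 1 * (p * ρ ^ (p - 1) / s)) ρ :=
      hd2.congr_of_eventuallyEq heq
    convert hd3 using 1
    have hhρ : 0 ≤ h ρ := le_trans (Real.sqrt_nonneg um) (hpos ρ hρ')
    rw [key ρ hρ0, Real.sqrt_mul (by positivity), Real.sqrt_mul hγ1'.le,
      Real.sqrt_sq hhρ, hsr ρ _ hρ0.le, ← hs,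
      show p - 1 = (γ - 3) / 2 by rw [hp]; ring, hp, pow_one, ← hss]
    field_simp
  · have h1 : Tendsto (fun ρ : ℝ => ρ ^ p) atTop atTop := tendsto_rpow_atTop hp0
    have h2 : Tendsto h atTop atTop :=
      tendsto_atTop_add_const_left _ _ (h1.atTop_div_const hs0)
    have h3 : Tendsto (fun ρ => (h ρ) ^ 2) atTop atTop := by
      simpa [sq] using h2.atTop_mul_atTop₀ h2
    exact h3.congr' (by filter_upwards [eventually_gt_atTop 0] with x hx using (key x hx).symm)
end

section
/- Let ρ_- > 0, ρ_+ > 0 with ρ_+ ≠ ρ_-, and u_- > u_+ > 0. Set Q(γ) = (ρ_+^γ − ρ_-^γ)/(ρ_+ − ρ_-) and A(γ) = (1/(4ρ_+²ρ_-²))(ρ_+^γ − (ρ_+/γ)Q(γ))² + (1 − 1/γ)(u_- /(ρ_+ρ_-))Q(γ). Then there exists γ_0 > 0 such that for all γ ∈ (1, 1 + γ_0): if ρ_+ > ρ_- then u_+ < u_- + (1/(2ρ_+ρ_-))(ρ_+^γ(ρ_+ − ρ_-) − (ρ_+/γ)(ρ_+^γ − ρ_-^γ)) − (ρ_+ − ρ_-)√A(γ),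 and if ρ_+ < ρ_- then u_+ < u_- + (1/(2ρ_+ρ_-))(ρ_+^γ(ρ_+ − ρ_-) − (ρ_+/γ)(ρ_+^γ − ρ_-^γ)) + (ρ_+ − ρ_-)√A(γ). Consequently (ρ_+,u_+) lies strictly below both shock curves S_1(ρ_-,u_-) and S_2(ρ_-,u_-), i.e. (ρ_+,u_+) belongs to the two-shock region IV(ρ_-,u_-). -/
/-- `Q(γ) = (ρ_+^γ − ρ_-^γ)/(ρ_+ − ρ_-)`. -/
noncomputable def Qfun (ρm ρp γ : ℝ) : ℝ := (ρp ^ γ - ρm ^ γ) / (ρp - ρm)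

/-- `A(γ) = (1/(4ρ_+²ρ_-²))(ρ_+^γ − (ρ_+/γ)Q(γ))² + (1 − 1/γ)(u_- / (ρ_+ρ_-))Q(γ)`. -/
noncomputable def Afun (ρm ρp um γ : ℝ) : ℝ :=
  (1 / (4 * ρp ^ 2 * ρm ^ 2)) * (ρp ^ γ - (ρp / γ) * Qfun ρm ρp γ) ^ 2
    + (1 - 1 / γ) * (um / (ρp * ρm)) * Qfun ρm ρp γ

/-!
At `γ = 1` the bracket `ρ_+^γ (ρ_+ − ρ_-) − (ρ_+/γ)(ρ_+^γ − ρ_-^γ)` and `A(γ)` both vanish, so both shock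
curves through `(ρ_-, u_-)` take the value `u_-` at `ρ_+`. Everything is continuous in `γ` near `1`,
so the strict inequality `u_+ < u_-` persists for `γ` close to `1`, whatever the sign of `ρ_+ − ρ_-`.
-/

open Filter Topology Set

section
variable {ρm ρp : ℝ}

lemma Qfun_one (hne : ρp ≠ ρm) : Qfun ρm ρp 1 = 1 := by
  simp [Qfun, div_self (sub_ne_zero.mpr hne)]

lemma Afun_one (um : ℝ) (hne : ρp ≠ ρm) : Afun ρm ρp um 1 = 0 := by
  simp [Afun, Qfun_one hne]

lemma continuousAt_Afun (um : ℝ) {γ : ℝ} (hρm : ρm ≠ 0) (hρp : ρp ≠ 0) (hγ : γ ≠ 0) :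
    ContinuousAt (Afun ρm ρp um) γ := by
  have := Real.continuousAt_const_rpow hρm (b := γ)
  have := Real.continuousAt_const_rpow hρp (b := γ)
  unfold Afun Qfun
  fun_prop (disch := assumption)

lemma eventually_lt_shockCurve {um up : ℝ} (hρm : ρm ≠ 0) (hρp : ρp ≠ 0) (hne : ρp ≠ ρm)
    (hu : up < um) (c : ℝ) :
    ∀ᶠ γ in 𝓝 1, up < um + (1 / (2 * ρp * ρm)) *
      (ρp ^ γ * (ρp - ρm) - (ρp / γ) * (ρp ^ γ - ρm ^ γ)) + c * √(Afun ρm ρp um γ) := by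
  have hρm' := Real.continuousAt_const_rpow hρm (b := 1)
  have hρp' := Real.continuousAt_const_rpow hρp (b := 1)
  have hA := continuousAt_Afun um hρm hρp one_ne_zero
  have hcont : ContinuousAt (fun γ : ℝ => um + (1 / (2 * ρp * ρm)) *
      (ρp ^ γ * (ρp - ρm) - (ρp / γ) * (ρp ^ γ - ρm ^ γ)) + c * √(Afun ρm ρp um γ)) 1 := by
    fun_prop (disch := norm_num)
  refine hcont.eventually_const_lt ?_
  simpa [Afun_one um hne] using hu
end

theorem stmt12_general (ρm ρp um up : ℝ) (hρm : 0 < ρm) (hρp : 0 < ρp) (hne : ρp ≠ ρm)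
    (hu : up < um) :
    ∃ γ0 > (0 : ℝ), ∀ γ : ℝ, 1 < γ → γ < 1 + γ0 →
      (ρm < ρp →
        up < um + (1 / (2 * ρp * ρm)) * (ρp ^ γ * (ρp - ρm) - (ρp / γ) * (ρp ^ γ - ρm ^ γ))
          - (ρp - ρm) * Real.sqrt (Afun ρm ρp um γ)) ∧
      (ρp < ρm →
        up < um + (1 / (2 * ρp * ρm)) * (ρp ^ γ * (ρp - ρm) - (ρp / γ) * (ρp ^ γ - ρm ^ γ))
          + (ρp - ρm) * Real.sqrt (Afun ρm ρp um γ)) := by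
  have hbelow (c : ℝ) := eventually_lt_shockCurve hρm.ne' hρp.ne' hne hu c
  obtain ⟨b, hb, hsub⟩ := mem_nhdsGT_iff_exists_Ioo_subset.mp
    (nhdsWithin_le_nhds ((hbelow (-(ρp - ρm))).and (hbelow (ρp - ρm))))
  refine ⟨b - 1, by linarith [mem_Ioi.mp hb], fun γ h1 h2 => ?_⟩
  obtain ⟨hS1, hS2⟩ := hsub ⟨h1, by linarith⟩
  rw [neg_mul, ← sub_eq_add_neg] at hS1
  exact ⟨fun _ => hS1, fun _ => hS2⟩

/-- For `ρ_± > 0`, `ρ_+ ≠ ρ_-`, `u_- > u_+ > 0`: there is `γ_0 > 0` so that for all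
`γ ∈ (1, 1 + γ_0)` the state `(ρ_+, u_+)` lies strictly below both shock curves
`S_1(ρ_-,u_-)` and `S_2(ρ_-,u_-)` of the perturbed Aw–Rascle system, i.e.
`(ρ_+,u_+)` belongs to the two-shock region `IV(ρ_-,u_-)`. -/
theorem stmt12 (ρm ρp um up : ℝ) (hρm : 0 < ρm) (hρp : 0 < ρp) (hne : ρp ≠ ρm)
    (hu : up < um) (hup : 0 < up) :
    ∃ γ0 > (0 : ℝ), ∀ γ : ℝ, 1 < γ → γ < 1 + γ0 →
      (ρm < ρp →
        up < um + (1 / (2 * ρp * ρm)) * (ρp ^ γ * (ρp - ρm) - (ρp / γ) * (ρp ^ γ - ρm ^ γ))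
          - (ρp - ρm) * Real.sqrt (Afun ρm ρp um γ)) ∧
      (ρp < ρm →
        up < um + (1 / (2 * ρp * ρm)) * (ρp ^ γ * (ρp - ρm) - (ρp / γ) * (ρp ^ γ - ρm ^ γ))
          + (ρp - ρm) * Real.sqrt (Afun ρm ρp um γ)) :=
  stmt12_general ρm ρp um up hρm hρp hne hu
end

section
/- Under the stated hypotheses on the intermediate state, lim_{γ→1+} ρ_*(γ) = +∞ and lim_{γ→1+} (γ−1) ρ_*(γ)^γ u_*(γ) = ( √(ρ_-ρ_+)(u_- − u_+)/(√ρ_- + √ρ_+) )². -/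
open Filter Topology

set_option maxHeartbeats 1000000


private lemma aux_cont_rpow {c : ℝ} (hc : 0 < c) : Continuous fun x : ℝ => c ^ x := by
  have h : (fun x : ℝ => c ^ x) = fun x => Real.exp (Real.log c * x) := by
    funext x; exact Real.rpow_def_of_pos hc x
  rw [h]
  exact Real.continuous_exp.comp (continuous_const.mul continuous_id)

private lemma aux_abs_sub_sqrt {x y : ℝ} (hx : 0 ≤ x) (hy : 0 ≤ y) :
    |x - y| ≤ Real.sqrt |x ^ 2 - y ^ 2| := by
  have h1 : (x - y) ^ 2 ≤ |x ^ 2 - y ^ 2| := by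
    rcases le_total x y with h | h
    · nlinarith [neg_abs_le (x ^ 2 - y ^ 2)]
    · nlinarith [le_abs_self (x ^ 2 - y ^ 2)]
  calc |x - y| = Real.sqrt ((x - y) ^ 2) := (Real.sqrt_sq_eq_abs _).symm
    _ ≤ _ := Real.sqrt_le_sqrt h1

private lemma aux_est {γ x p E ps v q a d Cp ρ u : ℝ}
    (hγ : 1 < γ) (hx : x ^ 2 = (1 / γ) * E)
    (hE : E - p / ρ = -(p / ps) - v * q + a * d)
    (hp0 : 0 ≤ p) (hpC : p ≤ Cp) (hps : 0 < ps)
    (hv0 : 0 ≤ v) (hv : v ≤ 1 / ρ) (hq : 0 ≤ q)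
    (ha0 : 0 ≤ a) (ha : a ≤ u) (hρ : 0 < ρ) :
    |x ^ 2 - p / ρ| ≤ (1 - 1 / γ) * (Cp / ρ) + Cp * ps⁻¹ + (1 / ρ) * q + u * |d| := by
  have hγ0 : (0:ℝ) < γ := by linarith
  have h1γ : (0:ℝ) < 1 / γ := by positivity
  have h1γle : 1 / γ ≤ 1 := by rw [div_le_one hγ0]; linarith
  have hu0 : 0 ≤ u := ha0.trans ha
  have hdec : x ^ 2 - p / ρ = (1 / γ) * (E - p / ρ) + (1 / γ - 1) * (p / ρ) := by
    rw [hx]; ring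
  rw [hdec, hE]
  have hA : |(1 / γ) * (-(p / ps) - v * q + a * d)| ≤ p / ps + v * q + u * |d| := by
    rw [abs_mul]
    have h1 : |(1:ℝ) / γ| ≤ 1 := by rw [abs_of_pos h1γ]; exact h1γle
    have htr : |(-(p / ps) - v * q + a * d)| ≤ p / ps + v * q + u * |d| := by
      have t1 : |(-(p / ps) - v * q)| ≤ p / ps + v * q := by
        rw [show -(p / ps) - v * q = -((p / ps) + v * q) by ring, abs_neg,
          abs_of_nonneg (add_nonneg (div_nonneg hp0 hps.le) (mul_nonneg hv0 hq))]
      have t2 : |a * d| ≤ u * |d| := by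
        rw [abs_mul, abs_of_nonneg ha0]
        exact mul_le_mul_of_nonneg_right ha (abs_nonneg d)
      calc |(-(p / ps) - v * q + a * d)| ≤ |(-(p / ps) - v * q)| + |a * d| := abs_add_le _ _
        _ ≤ _ := by linarith
    calc |1 / γ| * |(-(p / ps) - v * q + a * d)|
        ≤ 1 * |(-(p / ps) - v * q + a * d)| := mul_le_mul_of_nonneg_right h1 (abs_nonneg _)
      _ = _ := one_mul _
      _ ≤ _ := htr
  have hB : |(1 / γ - 1) * (p / ρ)| ≤ (1 - 1 / γ) * (p / ρ) := by
    rw [abs_mul, abs_of_nonneg (div_nonneg hp0 hρ.le), abs_of_nonpos (by linarith)]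
    rw [neg_sub]
  have b1 : p / ps ≤ Cp * ps⁻¹ := by
    rw [div_eq_mul_inv]
    exact mul_le_mul_of_nonneg_right hpC (inv_nonneg.2 hps.le)
  have b2 : v * q ≤ (1 / ρ) * q := mul_le_mul_of_nonneg_right hv hq
  have b3 : (1 - 1 / γ) * (p / ρ) ≤ (1 - 1 / γ) * (Cp / ρ) :=
    mul_le_mul_of_nonneg_left (by gcongr) (by linarith)
  calc |(1 / γ) * (-(p / ps) - v * q + a * d) + (1 / γ - 1) * (p / ρ)|
      ≤ |(1 / γ) * (-(p / ps) - v * q + a * d)| + |(1 / γ - 1) * (p / ρ)| := abs_add_le _ _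
    _ ≤ _ := by linarith

private lemma aux_prod_le {c v s C V S : ℝ} (hc : 0 ≤ c) (hcC : c ≤ C) (hv : 0 ≤ v)
    (hvV : v ≤ V) (hs : s ≤ S) (hS : 0 ≤ S) : c * v * s ≤ C * V * S := by
  have hCV : 0 ≤ C * V := mul_nonneg (hc.trans hcC) (hv.trans hvV)
  rcases le_total s 0 with h | h
  · have h1 : c * v * s ≤ 0 := mul_nonpos_of_nonneg_of_nonpos (mul_nonneg hc hv) h
    have h2 : 0 ≤ C * V * S := mul_nonneg hCV hS
    linarith
  · exact mul_le_mul (mul_le_mul hcC hvV hv (hc.trans hcC)) hs h hCV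


private lemma aux_half {x y : ℝ} : (x + y) ^ 2 / 2 ≤ x ^ 2 + y ^ 2 := by
  nlinarith [sq_nonneg (x - y)]

private lemma aux_gam {γ x y : ℝ} (h : 1 ≤ γ) : x ^ 2 + y ^ 2 ≤ γ * x ^ 2 + γ * y ^ 2 := by
  nlinarith [sq_nonneg x, sq_nonneg y]


/-- For the perturbed Aw–Rascle system with `ρ_± > 0`, `u_- > u_+ > 0`: if
`ρ_*, u_* : (1,γ̄) → ℝ` are continuous, `ρ_*(γ) > max(ρ_-,ρ_+)`,
`u_+ < u_*(γ) < u_-`, and the two Rankine–Hugoniot relations hold, then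
`ρ_*(γ) → +∞` and `(γ−1)ρ_*(γ)^γ u_*(γ) → (√(ρ_-ρ_+)(u_- − u_+)/(√ρ_- + √ρ_+))²`
as `γ → 1+`. -/
theorem stmt13 (ρm ρp um up γb : ℝ) (hρm : 0 < ρm) (hρp : 0 < ρp)
    (hu : up < um) (hup : 0 < up) (hγb1 : 1 < γb) (hγb3 : γb ≤ 3)
    (ρs us : ℝ → ℝ)
    (hρc : ContinuousOn ρs (Set.Ioo 1 γb)) (husc : ContinuousOn us (Set.Ioo 1 γb))
    (hbig : ∀ γ ∈ Set.Ioo (1 : ℝ) γb, max ρm ρp < ρs γ)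
    (hmid : ∀ γ ∈ Set.Ioo (1 : ℝ) γb, up < us γ ∧ us γ < um)
    (hRH1 : ∀ γ ∈ Set.Ioo (1 : ℝ) γb,
      us γ - um = -Real.sqrt ((1 / γ) *
        ((γ - 1) * (1 / ρm - 1 / ρs γ) * (ρs γ ^ γ * us γ - ρm ^ γ * um)
          + (um - us γ) * (ρs γ ^ (γ - 1) - ρm ^ (γ - 1)))))
    (hRH2 : ∀ γ ∈ Set.Ioo (1 : ℝ) γb,
      up - us γ = -Real.sqrt ((1 / γ) *
        ((γ - 1) * (1 / ρs γ - 1 / ρp) * (ρp ^ γ * up - ρs γ ^ γ * us γ)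
          + (us γ - up) * (ρp ^ (γ - 1) - ρs γ ^ (γ - 1))))) :
    Tendsto ρs (𝓝[>] 1) atTop ∧
    Tendsto (fun γ : ℝ => (γ - 1) * ρs γ ^ γ * us γ) (𝓝[>] 1)
      (𝓝 ((Real.sqrt (ρm * ρp) * (um - up) / (Real.sqrt ρm + Real.sqrt ρp)) ^ 2)) := by
  have hum : 0 < um := hup.trans hu
  have hD : 0 < um - up := sub_pos.2 hu
  set l := 𝓝[>] (1 : ℝ) with hldef
  have hmem : Set.Ioo (1 : ℝ) γb ∈ l := Ioo_mem_nhdsGT_of_mem ⟨le_refl 1, hγb1⟩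
  have hIoo : ∀ᶠ γ in l, γ ∈ Set.Ioo (1 : ℝ) γb := hmem
  -- basic per-γ facts
  have hρspos : ∀ γ ∈ Set.Ioo (1 : ℝ) γb, 0 < ρs γ := fun γ hγ =>
    lt_trans (lt_of_lt_of_le hρm (le_max_left _ _)) (hbig γ hγ)
  -- the two identities
  have hI1 : ∀ γ ∈ Set.Ioo (1 : ℝ) γb,
      γ * (um - us γ) ^ 2 =
        (γ - 1) * (1 / ρm - 1 / ρs γ) * (ρs γ ^ γ * us γ - ρm ^ γ * um)
          + (um - us γ) * (ρs γ ^ (γ - 1) - ρm ^ (γ - 1)) := by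
    intro γ hγ
    have h := hRH1 γ hγ
    have ha : 0 < um - us γ := sub_pos.2 (hmid γ hγ).2
    set E := (γ - 1) * (1 / ρm - 1 / ρs γ) * (ρs γ ^ γ * us γ - ρm ^ γ * um)
          + (um - us γ) * (ρs γ ^ (γ - 1) - ρm ^ (γ - 1)) with hE
    have hsq : Real.sqrt (1 / γ * E) = um - us γ := by linarith
    have hpos : 0 < 1 / γ * E := Real.sqrt_pos.mp (by rw [hsq]; exact ha)
    have h2 : (um - us γ) ^ 2 = 1 / γ * E := by rw [← hsq, Real.sq_sqrt hpos.le]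
    have hγ0 : γ ≠ 0 := by have := hγ.1; linarith
    rw [h2]; field_simp
  have hI2 : ∀ γ ∈ Set.Ioo (1 : ℝ) γb,
      γ * (us γ - up) ^ 2 =
        (γ - 1) * (1 / ρs γ - 1 / ρp) * (ρp ^ γ * up - ρs γ ^ γ * us γ)
          + (us γ - up) * (ρp ^ (γ - 1) - ρs γ ^ (γ - 1)) := by
    intro γ hγ
    have h := hRH2 γ hγ
    have ha : 0 < us γ - up := sub_pos.2 (hmid γ hγ).1
    set E := (γ - 1) * (1 / ρs γ - 1 / ρp) * (ρp ^ γ * up - ρs γ ^ γ * us γ)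
          + (us γ - up) * (ρp ^ (γ - 1) - ρs γ ^ (γ - 1)) with hE
    have hsq : Real.sqrt (1 / γ * E) = us γ - up := by linarith
    have hpos : 0 < 1 / γ * E := Real.sqrt_pos.mp (by rw [hsq]; exact ha)
    have h2 : (us γ - up) ^ 2 = 1 / γ * E := by rw [← hsq, Real.sq_sqrt hpos.le]
    have hγ0 : γ ≠ 0 := by have := hγ.1; linarith
    rw [h2]; field_simp
  -- Part 1 : ρs → ∞
  have htop : Tendsto ρs l atTop := by
    rw [tendsto_atTop]
    intro M
    by_contra hM
    have hfreq : ∃ᶠ γ in l, ρs γ < M := by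
      have h1 := not_eventually.mp hM
      exact h1.mono fun γ h => lt_of_not_ge h
    haveI hFne : (l ⊓ 𝓟 {γ | ρs γ < M}).NeBot := Filter.frequently_iff_neBot.mp hfreq
    set F := l ⊓ 𝓟 {γ | ρs γ < M} with hFdef
    obtain ⟨K, hKdef⟩ : ∃ K : ℝ, K = max (max M 1) (max ρm ρp) := ⟨_, rfl⟩
    obtain ⟨m0, hm0def⟩ : ∃ m0 : ℝ, m0 = min (min ρm ρp) 1 := ⟨_, rfl⟩
    have hK1 : (1:ℝ) ≤ K := hKdef ▸ le_max_of_le_left (le_max_right _ _)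
    have hKpos : (0:ℝ) < K := lt_of_lt_of_le one_pos hK1
    have hm0pos : 0 < m0 := hm0def ▸ lt_min (lt_min hρm hρp) one_pos
    obtain ⟨B, hBdef⟩ : ∃ B : ℝ → ℝ, B = fun γ : ℝ =>
        (γ - 1) * (1 / ρm) * (K ^ γ * um) + (γ - 1) * (1 / ρp) * (K ^ γ * um)
        + 2 * (um * (K ^ (γ - 1) - m0 ^ (γ - 1))) := ⟨_, rfl⟩
    have hBt : Tendsto B F (𝓝 0) := by
      rw [hBdef]
      have hc : Continuous (fun γ : ℝ =>
        (γ - 1) * (1 / ρm) * (K ^ γ * um) + (γ - 1) * (1 / ρp) * (K ^ γ * um)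
        + 2 * (um * (K ^ (γ - 1) - m0 ^ (γ - 1)))) := by
        apply Continuous.add
        apply Continuous.add
        · exact ((continuous_id.sub continuous_const).mul continuous_const).mul
            (((aux_cont_rpow hKpos)).mul continuous_const)
        · exact ((continuous_id.sub continuous_const).mul continuous_const).mul
            (((aux_cont_rpow hKpos)).mul continuous_const)
        · exact continuous_const.mul (continuous_const.mul
            (((aux_cont_rpow hKpos).comp (continuous_id.sub continuous_const)).sub
             ((aux_cont_rpow hm0pos).comp (continuous_id.sub continuous_const))))
      have h1 := (hc.continuousAt (x := 1)).tendsto.mono_left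
        (le_trans inf_le_left nhdsWithin_le_nhds : F ≤ 𝓝 1)
      convert h1 using 2
      norm_num
    have hlow : ∀ᶠ γ in F, (um - up) ^ 2 / 2 ≤ B γ := by
      have h1 : ∀ᶠ γ in F, γ ∈ Set.Ioo (1:ℝ) γb :=
        Filter.Eventually.filter_mono inf_le_left (eventually_mem_set.mpr hmem)
      have h2 : ∀ᶠ γ in F, ρs γ < M := by
        rw [hFdef, eventually_inf_principal]
        exact Eventually.of_forall fun γ h => h
      filter_upwards [h1, h2] with γ hγ hρM
      have hγ1 : 1 < γ := hγ.1
      have hγ3 : γ ≤ 3 := le_trans hγ.2.le hγb3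
      have hρ : 0 < ρs γ := hρspos γ hγ
      have hρK : ρs γ ≤ K := hKdef ▸ le_trans hρM.le (le_max_of_le_left (le_max_left _ _))
      have hρmK : ρm ≤ K := hKdef ▸ le_max_of_le_right (le_max_left _ _)
      have hρpK : ρp ≤ K := hKdef ▸ le_max_of_le_right (le_max_right _ _)
      have hm0ρm : m0 ≤ ρm := hm0def ▸ le_trans (min_le_left _ _) (min_le_left _ _)
      have hm0ρp : m0 ≤ ρp := hm0def ▸ le_trans (min_le_left _ _) (min_le_right _ _)
      have hm0ρs : m0 ≤ ρs γ :=
        le_trans hm0ρm (le_trans (le_max_left ρm ρp) (hbig γ hγ).le)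
      have hus := hmid γ hγ
      have hγε : (0:ℝ) ≤ γ - 1 := by linarith
      -- rpow bounds
      have hb1 : ρs γ ^ γ ≤ K ^ γ := Real.rpow_le_rpow hρ.le hρK (by linarith)
      have hb2 : ρm ^ γ ≤ K ^ γ := Real.rpow_le_rpow hρm.le hρmK (by linarith)
      have hb3 : ρp ^ γ ≤ K ^ γ := Real.rpow_le_rpow hρp.le hρpK (by linarith)
      have hb4 : ρs γ ^ (γ-1) ≤ K ^ (γ-1) := Real.rpow_le_rpow hρ.le hρK hγε
      have hb5 : m0 ^ (γ-1) ≤ ρs γ ^ (γ-1) := Real.rpow_le_rpow hm0pos.le hm0ρs hγε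
      have hb6 : ρm ^ (γ-1) ≤ K ^ (γ-1) := Real.rpow_le_rpow hρm.le hρmK hγε
      have hb7 : m0 ^ (γ-1) ≤ ρm ^ (γ-1) := Real.rpow_le_rpow hm0pos.le hm0ρm hγε
      have hb8 : ρp ^ (γ-1) ≤ K ^ (γ-1) := Real.rpow_le_rpow hρp.le hρpK hγε
      have hb9 : m0 ^ (γ-1) ≤ ρp ^ (γ-1) := Real.rpow_le_rpow hm0pos.le hm0ρp hγε
      have hpos1 : 0 < ρs γ ^ γ := Real.rpow_pos_of_pos hρ γ
      have hpos2 : 0 < ρm ^ γ := Real.rpow_pos_of_pos hρm γ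
      have hpos3 : 0 < ρp ^ γ := Real.rpow_pos_of_pos hρp γ
      -- v bounds
      have hρsm : ρm < ρs γ := lt_of_le_of_lt (le_max_left ρm ρp) (hbig γ hγ)
      have hρsp : ρp < ρs γ := lt_of_le_of_lt (le_max_right ρm ρp) (hbig γ hγ)
      have hv1a : 0 ≤ 1 / ρm - 1 / ρs γ := by
        have := one_div_le_one_div_of_le hρm hρsm.le; linarith
      have hv1b : 1 / ρm - 1 / ρs γ ≤ 1 / ρm := by
        have : 0 < 1 / ρs γ := by positivity
        linarith
      have hv2a : 0 ≤ 1 / ρp - 1 / ρs γ := by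
        have := one_div_le_one_div_of_le hρp hρsp.le; linarith
      have hv2b : 1 / ρp - 1 / ρs γ ≤ 1 / ρp := by
        have : 0 < 1 / ρs γ := by positivity
        linarith
      have huspos : 0 < us γ := lt_trans hup hus.1
      have e1 := hI1 γ hγ
      have e2 := hI2 γ hγ
      have hSa : ρs γ ^ γ * us γ ≤ K ^ γ * um :=
        mul_le_mul hb1 hus.2.le huspos.le (by positivity)
      have htA : (γ - 1) * (1 / ρm - 1 / ρs γ) * (ρs γ ^ γ * us γ - ρm ^ γ * um)
          ≤ (γ - 1) * (1 / ρm) * (K ^ γ * um) := by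
        apply aux_prod_le hγε le_rfl hv1a hv1b
        · linarith [hSa, mul_pos hpos2 hum]
        · positivity
      have htB : (um - us γ) * (ρs γ ^ (γ - 1) - ρm ^ (γ - 1))
          ≤ um * (K ^ (γ - 1) - m0 ^ (γ - 1)) := by
        have hc1 : (0:ℝ) ≤ um - us γ := by linarith [hus.2]
        have hc2 : um - us γ ≤ um := by linarith [huspos]
        have hc3 : ρs γ ^ (γ - 1) - ρm ^ (γ - 1) ≤ K ^ (γ - 1) - m0 ^ (γ - 1) := by
          linarith [hb4, hb7]
        have hc4 : (0:ℝ) ≤ K ^ (γ - 1) - m0 ^ (γ - 1) := by linarith [hb4, hb5]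
        have h := aux_prod_le hc1 hc2 zero_le_one le_rfl hc3 hc4
        linarith [h]
      have htC : (γ - 1) * (1 / ρs γ - 1 / ρp) * (ρp ^ γ * up - ρs γ ^ γ * us γ)
          ≤ (γ - 1) * (1 / ρp) * (K ^ γ * um) := by
        have hrw : (γ - 1) * (1 / ρs γ - 1 / ρp) * (ρp ^ γ * up - ρs γ ^ γ * us γ)
            = (γ - 1) * (1 / ρp - 1 / ρs γ) * (ρs γ ^ γ * us γ - ρp ^ γ * up) := by ring
        rw [hrw]
        apply aux_prod_le hγε le_rfl hv2a hv2b
        · linarith [hSa, mul_pos hpos3 hup]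
        · positivity
      have htD : (us γ - up) * (ρp ^ (γ - 1) - ρs γ ^ (γ - 1))
          ≤ um * (K ^ (γ - 1) - m0 ^ (γ - 1)) := by
        have hc1 : (0:ℝ) ≤ us γ - up := by linarith [hus.1]
        have hc2 : us γ - up ≤ um := by linarith [hus.2, hup]
        have hc3 : ρp ^ (γ - 1) - ρs γ ^ (γ - 1) ≤ K ^ (γ - 1) - m0 ^ (γ - 1) := by
          linarith [hb8, hb5]
        have hc4 : (0:ℝ) ≤ K ^ (γ - 1) - m0 ^ (γ - 1) := by linarith [hb4, hb5]
        have h := aux_prod_le hc1 hc2 zero_le_one le_rfl hc3 hc4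
        linarith [h]
      have hx : (um - up) ^ 2 / 2 ≤ (um - us γ) ^ 2 + (us γ - up) ^ 2 := by
        have h := aux_half (x := um - us γ) (y := us γ - up)
        rw [show um - us γ + (us γ - up) = um - up by ring] at h
        exact h
      have hy : (um - us γ) ^ 2 + (us γ - up) ^ 2 ≤ γ * (um - us γ) ^ 2 + γ * (us γ - up) ^ 2 :=
        aux_gam hγ1.le
      rw [hBdef]
      linarith [e1, e2, htA, htB, htC, htD, hx, hy]
    have hcon : (um - up) ^ 2 / 2 ≤ 0 := ge_of_tendsto hBt hlow
    nlinarith [hD]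
  refine ⟨htop, ?_⟩
  have hIoo : ∀ᶠ γ in l, γ ∈ Set.Ioo (1 : ℝ) γb := eventually_mem_set.mpr hmem
  obtain ⟨P, hPdef⟩ : ∃ P : ℝ → ℝ, P = fun γ : ℝ => (γ - 1) * ρs γ ^ γ * us γ := ⟨_, rfl⟩
  have hPapp : ∀ x, P x = (x - 1) * ρs x ^ x * us x := fun x => by rw [hPdef]
  have hPnn : ∀ γ ∈ Set.Ioo (1 : ℝ) γb, 0 ≤ P γ := by
    intro γ hγ
    rw [hPapp]
    have h1 : (0:ℝ) ≤ γ - 1 := by linarith [hγ.1]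
    have h2 : 0 < ρs γ ^ γ := Real.rpow_pos_of_pos (hρspos γ hγ) γ
    have h3 : 0 < us γ := lt_trans hup (hmid γ hγ).1
    positivity
  -- uniform bound on P
  obtain ⟨Rm, hRmdef⟩ : ∃ R : ℝ, R = (max ρm 1) ^ (2:ℝ) := ⟨_, rfl⟩
  have hRm0 : 0 ≤ Rm := by rw [hRmdef]; positivity
  obtain ⟨Cp, hCpdef⟩ : ∃ C : ℝ, C = (3 * um ^ 2 + um * Rm + 2 * (Rm * um)) * (2 * ρm) := ⟨_, rfl⟩
  have hPb : ∀ᶠ γ in l, P γ ≤ Cp := by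
    filter_upwards [hIoo, htop.eventually_ge_atTop (2 * ρm)] with γ hγ h2ρ
    have hγ1 : 1 < γ := hγ.1
    have hγ3 : γ ≤ 3 := le_trans hγ.2.le hγb3
    have hρsγ : 0 < ρs γ := hρspos γ hγ
    have hus := hmid γ hγ
    have huspos : 0 < us γ := lt_trans hup hus.1
    have e1 := hI1 γ hγ
    have key : (1 / ρm - 1 / ρs γ) * P γ =
        γ * (um - us γ) ^ 2 - (um - us γ) * (ρs γ ^ (γ - 1)) + (um - us γ) * (ρm ^ (γ - 1))
          + (1 / ρm - 1 / ρs γ) * ((γ - 1) * (ρm ^ γ * um)) := by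
      rw [hPapp]
      linear_combination -e1
    have hXm : ρm ^ (γ - 1) ≤ Rm := by
      rw [hRmdef]
      calc ρm ^ (γ - 1) ≤ (max ρm 1) ^ (γ - 1) :=
            Real.rpow_le_rpow hρm.le (le_max_left _ _) (by linarith)
        _ ≤ (max ρm 1) ^ (2:ℝ) :=
            Real.rpow_le_rpow_of_exponent_le (le_max_right _ _) (by linarith)
    have hMm : ρm ^ γ ≤ ρm * Rm := by
      have h : ρm ^ γ = ρm ^ (γ - 1) * ρm := by
        rw [show γ = (γ - 1) + 1 by ring, Real.rpow_add_one (ne_of_gt hρm)]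
        ring_nf
      rw [h]
      calc ρm ^ (γ - 1) * ρm ≤ Rm * ρm :=
            mul_le_mul_of_nonneg_right hXm hρm.le
        _ = ρm * Rm := by ring
    have hv1a : 0 ≤ 1 / ρm - 1 / ρs γ := by
      have h1 : 1 / ρs γ ≤ 1 / ρm := one_div_le_one_div_of_le hρm (by linarith)
      linarith
    have hv1b : 1 / ρm - 1 / ρs γ ≤ 1 / ρm := by
      have : 0 < 1 / ρs γ := by positivity
      linarith
    have hv1c : 1 / (2 * ρm) ≤ 1 / ρm - 1 / ρs γ := by
      have h1 : 1 / ρs γ ≤ 1 / (2 * ρm) := one_div_le_one_div_of_le (by positivity) h2ρ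
      have h2 : 1 / ρm - 1 / (2 * ρm) = 1 / (2 * ρm) := by field_simp; ring
      linarith
    -- bound the RHS of key
    have haum : um - us γ ≤ um := by linarith
    have ha0 : 0 ≤ um - us γ := by linarith [hus.2]
    have t1 : γ * (um - us γ) ^ 2 ≤ 3 * um ^ 2 := by
      have h1 : (um - us γ) ^ 2 ≤ um ^ 2 := pow_le_pow_left₀ ha0 haum 2
      exact mul_le_mul hγ3 h1 (sq_nonneg _) (by norm_num)
    have t2 : 0 ≤ (um - us γ) * (ρs γ ^ (γ - 1)) :=
      mul_nonneg ha0 (Real.rpow_nonneg hρsγ.le _)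
    have t3 : (um - us γ) * (ρm ^ (γ - 1)) ≤ um * Rm :=
      mul_le_mul haum hXm (Real.rpow_nonneg hρm.le _) hum.le
    have t4 : (1 / ρm - 1 / ρs γ) * ((γ - 1) * (ρm ^ γ * um)) ≤ 2 * (Rm * um) := by
      have h1 : (γ - 1) * (ρm ^ γ * um) ≤ 2 * ((ρm * Rm) * um) := by
        have h2 : ρm ^ γ * um ≤ (ρm * Rm) * um :=
          mul_le_mul_of_nonneg_right hMm hum.le
        have h3 : 0 ≤ ρm ^ γ * um := mul_nonneg (Real.rpow_nonneg hρm.le _) hum.le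
        have h4 : (0:ℝ) ≤ γ - 1 := by linarith
        have h5 : γ - 1 ≤ 2 := by linarith
        exact mul_le_mul h5 h2 h3 (by norm_num)
      have h6 : (1 / ρm - 1 / ρs γ) * ((γ - 1) * (ρm ^ γ * um))
          ≤ (1 / ρm) * (2 * ((ρm * Rm) * um)) := by
        have h7 : 0 ≤ (γ - 1) * (ρm ^ γ * um) :=
          mul_nonneg (by linarith) (mul_nonneg (Real.rpow_nonneg hρm.le _) hum.le)
        exact mul_le_mul hv1b h1 h7 (by positivity)
      have h8 : (1 / ρm) * (2 * ((ρm * Rm) * um)) = 2 * (Rm * um) := by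
        field_simp
      linarith
    have hkey2 : (1 / ρm - 1 / ρs γ) * P γ ≤ 3 * um ^ 2 + um * Rm + 2 * (Rm * um) := by
      linarith [key, t1, t2, t3, t4]
    have hPγ : 0 ≤ P γ := hPnn γ hγ
    have h9 : P γ * (1 / (2 * ρm)) ≤ (1 / ρm - 1 / ρs γ) * P γ := by
      calc P γ * (1 / (2 * ρm)) ≤ P γ * (1 / ρm - 1 / ρs γ) :=
            mul_le_mul_of_nonneg_left hv1c hPγ
        _ = (1 / ρm - 1 / ρs γ) * P γ := by ring
    have h10 : P γ * (1 / (2 * ρm)) ≤ 3 * um ^ 2 + um * Rm + 2 * (Rm * um) := by linarith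
    rw [hCpdef]
    rw [mul_one_div] at h10
    exact (div_le_iff₀ (by positivity)).mp h10
  -- (γ-1) * log ρs → 0 and ρs^(γ-1) → 1
  have hgl : Tendsto (fun γ => (γ - 1) * Real.log (ρs γ)) l (𝓝 0) := by
    have hub : Tendsto (fun γ => Cp / up * (Real.log (ρs γ) / ρs γ)) l (𝓝 0) := by
      have h1 : Tendsto (fun x : ℝ => Real.log x / x) atTop (𝓝 0) :=
        Real.isLittleO_log_id_atTop.tendsto_div_nhds_zero
      have h2 := (h1.comp htop).const_mul (Cp / up)
      simpa using h2
    apply squeeze_zero' ?_ ?_ hub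
    · filter_upwards [hIoo, htop.eventually_ge_atTop 1] with γ hγ h1ρ
      exact mul_nonneg (by linarith [hγ.1]) (Real.log_nonneg h1ρ)
    · filter_upwards [hIoo, htop.eventually_ge_atTop 1, hPb] with γ hγ h1ρ hPle
      have hγ1 : 1 < γ := hγ.1
      have hρsγ : 0 < ρs γ := by linarith
      have hus := hmid γ hγ
      have hL : 0 ≤ Real.log (ρs γ) := Real.log_nonneg h1ρ
      have hr : ρs γ ≤ ρs γ ^ γ := by
        calc ρs γ = ρs γ ^ (1:ℝ) := (Real.rpow_one _).symm
          _ ≤ ρs γ ^ γ := Real.rpow_le_rpow_of_exponent_le h1ρ (by linarith)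
      have hstep : (γ - 1) * ρs γ * up ≤ Cp := by
        have h1 : (γ - 1) * ρs γ ≤ (γ - 1) * ρs γ ^ γ :=
          mul_le_mul_of_nonneg_left hr (by linarith)
        have h2 : ((γ - 1) * ρs γ) * up ≤ ((γ - 1) * ρs γ ^ γ) * us γ := by
          apply mul_le_mul h1 hus.1.le hup.le
          exact mul_nonneg (by linarith) (Real.rpow_nonneg hρsγ.le _)
        calc (γ - 1) * ρs γ * up ≤ ((γ - 1) * ρs γ ^ γ) * us γ := h2
          _ = P γ := by rw [hPapp]
          _ ≤ Cp := hPle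
      have hγle : γ - 1 ≤ Cp / (up * ρs γ) := by
        rw [le_div_iff₀ (by positivity)]
        calc (γ - 1) * (up * ρs γ) = (γ - 1) * ρs γ * up := by ring
          _ ≤ Cp := hstep
      calc (γ - 1) * Real.log (ρs γ) ≤ (Cp / (up * ρs γ)) * Real.log (ρs γ) :=
            mul_le_mul_of_nonneg_right hγle hL
        _ = Cp / up * (Real.log (ρs γ) / ρs γ) := by
            field_simp
  have hXs1 : Tendsto (fun γ => ρs γ ^ (γ - 1)) l (𝓝 1) := by
    have hc := (Real.continuous_exp.tendsto 0).comp hgl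
    rw [Real.exp_zero] at hc
    refine hc.congr' ?_
    filter_upwards [htop.eventually_gt_atTop 0] with γ h0
    simp only [Function.comp_apply]
    rw [Real.rpow_def_of_pos h0, mul_comm]
  have hXm1 : Tendsto (fun γ : ℝ => ρm ^ (γ - 1)) l (𝓝 1) := by
    have hc : Continuous (fun γ : ℝ => ρm ^ (γ - 1)) :=
      (aux_cont_rpow hρm).comp (continuous_id.sub continuous_const)
    have h1 := (hc.continuousAt (x := (1:ℝ))).tendsto.mono_left (nhdsWithin_le_nhds : l ≤ 𝓝 1)
    convert h1 using 2
    norm_num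
  have hXp1 : Tendsto (fun γ : ℝ => ρp ^ (γ - 1)) l (𝓝 1) := by
    have hc : Continuous (fun γ : ℝ => ρp ^ (γ - 1)) :=
      (aux_cont_rpow hρp).comp (continuous_id.sub continuous_const)
    have h1 := (hc.continuousAt (x := (1:ℝ))).tendsto.mono_left (nhdsWithin_le_nhds : l ≤ 𝓝 1)
    convert h1 using 2
    norm_num
  have hinv : Tendsto (fun γ => (ρs γ)⁻¹) l (𝓝 0) := htop.inv_tendsto_atTop
  have hγinv : Tendsto (fun γ : ℝ => 1 / γ) l (𝓝 1) := by
    have hc : ContinuousAt (fun γ : ℝ => 1 / γ) 1 :=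
      continuousAt_const.div continuousAt_id one_ne_zero
    have h1 := hc.tendsto.mono_left (nhdsWithin_le_nhds : l ≤ 𝓝 1)
    simpa using h1
  have hQm : Tendsto (fun γ : ℝ => (γ - 1) * (ρm ^ γ * um)) l (𝓝 0) := by
    have hc : Continuous (fun γ : ℝ => (γ - 1) * (ρm ^ γ * um)) :=
      (continuous_id.sub continuous_const).mul ((aux_cont_rpow hρm).mul continuous_const)
    have h1 := (hc.continuousAt (x := (1:ℝ))).tendsto.mono_left (nhdsWithin_le_nhds : l ≤ 𝓝 1)
    convert h1 using 2
    norm_num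
  have hQp : Tendsto (fun γ : ℝ => (γ - 1) * (ρp ^ γ * up)) l (𝓝 0) := by
    have hc : Continuous (fun γ : ℝ => (γ - 1) * (ρp ^ γ * up)) :=
      (continuous_id.sub continuous_const).mul ((aux_cont_rpow hρp).mul continuous_const)
    have h1 := (hc.continuousAt (x := (1:ℝ))).tendsto.mono_left (nhdsWithin_le_nhds : l ≤ 𝓝 1)
    convert h1 using 2
    norm_num
  -- squared differences tend to 0
  have hA2 : Tendsto (fun γ => (um - us γ) ^ 2 - P γ / ρm) l (𝓝 0) := by
    apply squeeze_zero_norm' (a := fun γ =>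
      (1 - 1 / γ) * (Cp / ρm) + Cp * (ρs γ)⁻¹ + (1 / ρm) * ((γ - 1) * (ρm ^ γ * um))
        + um * |ρs γ ^ (γ - 1) - ρm ^ (γ - 1)|)
    · filter_upwards [hIoo, hPb] with γ hγ hPle
      have hγ1 : 1 < γ := hγ.1
      have hγ0 : γ ≠ 0 := by linarith
      have hρsγ : 0 < ρs γ := hρspos γ hγ
      have hρsm : ρm < ρs γ := lt_of_le_of_lt (le_max_left ρm ρp) (hbig γ hγ)
      have hus := hmid γ hγ
      have e1 := hI1 γ hγ
      have hx : (um - us γ) ^ 2 = (1 / γ) *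
          ((γ - 1) * (1 / ρm - 1 / ρs γ) * (ρs γ ^ γ * us γ - ρm ^ γ * um)
            + (um - us γ) * (ρs γ ^ (γ - 1) - ρm ^ (γ - 1))) := by
        have hγ0' : γ ≠ 0 := by linarith
        rw [one_div, inv_mul_eq_div, eq_div_iff hγ0']
        linarith [e1]
      have hE : ((γ - 1) * (1 / ρm - 1 / ρs γ) * (ρs γ ^ γ * us γ - ρm ^ γ * um)
            + (um - us γ) * (ρs γ ^ (γ - 1) - ρm ^ (γ - 1))) - P γ / ρm =
          -(P γ / ρs γ) - (1 / ρm - 1 / ρs γ) * ((γ - 1) * (ρm ^ γ * um))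
            + (um - us γ) * (ρs γ ^ (γ - 1) - ρm ^ (γ - 1)) := by
        have hρs0 : ρs γ ≠ 0 := ne_of_gt hρsγ
        rw [hPapp]
        field_simp
        ring
      have hv1a : 0 ≤ 1 / ρm - 1 / ρs γ := by
        have h1 : 1 / ρs γ ≤ 1 / ρm := one_div_le_one_div_of_le hρm hρsm.le
        linarith
      have hv1b : 1 / ρm - 1 / ρs γ ≤ 1 / ρm := by
        have : 0 < 1 / ρs γ := by positivity
        linarith
      have hq0 : 0 ≤ (γ - 1) * (ρm ^ γ * um) :=
        mul_nonneg (by linarith) (mul_nonneg (Real.rpow_nonneg hρm.le _) hum.le)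
      rw [Real.norm_eq_abs]
      exact aux_est hγ1 hx hE (hPnn γ hγ) hPle hρsγ hv1a hv1b hq0
        (by linarith [hus.2]) (by linarith [hup, hus.1]) hρm
    · have hT := (((((tendsto_const_nhds (x := (1:ℝ)) (f := l)).sub hγinv).mul_const (Cp / ρm)).add
        (hinv.const_mul Cp)).add (hQm.const_mul (1 / ρm))).add
        (((hXs1.sub hXm1).abs).const_mul um)
      simpa using hT
  have hB2 : Tendsto (fun γ => (us γ - up) ^ 2 - P γ / ρp) l (𝓝 0) := by
    apply squeeze_zero_norm' (a := fun γ =>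
      (1 - 1 / γ) * (Cp / ρp) + Cp * (ρs γ)⁻¹ + (1 / ρp) * ((γ - 1) * (ρp ^ γ * up))
        + um * |ρp ^ (γ - 1) - ρs γ ^ (γ - 1)|)
    · filter_upwards [hIoo, hPb] with γ hγ hPle
      have hγ1 : 1 < γ := hγ.1
      have hγ0 : γ ≠ 0 := by linarith
      have hρsγ : 0 < ρs γ := hρspos γ hγ
      have hρsp : ρp < ρs γ := lt_of_le_of_lt (le_max_right ρm ρp) (hbig γ hγ)
      have hus := hmid γ hγ
      have e2 := hI2 γ hγ
      have hx : (us γ - up) ^ 2 = (1 / γ) *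
          ((γ - 1) * (1 / ρs γ - 1 / ρp) * (ρp ^ γ * up - ρs γ ^ γ * us γ)
            + (us γ - up) * (ρp ^ (γ - 1) - ρs γ ^ (γ - 1))) := by
        have hγ0' : γ ≠ 0 := by linarith
        rw [one_div, inv_mul_eq_div, eq_div_iff hγ0']
        linarith [e2]
      have hE : ((γ - 1) * (1 / ρs γ - 1 / ρp) * (ρp ^ γ * up - ρs γ ^ γ * us γ)
            + (us γ - up) * (ρp ^ (γ - 1) - ρs γ ^ (γ - 1))) - P γ / ρp =
          -(P γ / ρs γ) - (1 / ρp - 1 / ρs γ) * ((γ - 1) * (ρp ^ γ * up))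
            + (us γ - up) * (ρp ^ (γ - 1) - ρs γ ^ (γ - 1)) := by
        have hρs0 : ρs γ ≠ 0 := ne_of_gt hρsγ
        rw [hPapp]
        field_simp
        ring
      have hv1a : 0 ≤ 1 / ρp - 1 / ρs γ := by
        have h1 : 1 / ρs γ ≤ 1 / ρp := one_div_le_one_div_of_le hρp hρsp.le
        linarith
      have hv1b : 1 / ρp - 1 / ρs γ ≤ 1 / ρp := by
        have : 0 < 1 / ρs γ := by positivity
        linarith
      have hq0 : 0 ≤ (γ - 1) * (ρp ^ γ * up) :=
        mul_nonneg (by linarith) (mul_nonneg (Real.rpow_nonneg hρp.le _) hup.le)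
      rw [Real.norm_eq_abs]
      exact aux_est hγ1 hx hE (hPnn γ hγ) hPle hρsγ hv1a hv1b hq0
        (by linarith [hus.1]) (by linarith [hup, hus.2]) hρp
    · have hT := (((((tendsto_const_nhds (x := (1:ℝ)) (f := l)).sub hγinv).mul_const (Cp / ρp)).add
        (hinv.const_mul Cp)).add (hQp.const_mul (1 / ρp))).add
        (((hXp1.sub hXs1).abs).const_mul um)
      simpa using hT
  -- differences of square roots tend to 0
  have ha' : Tendsto (fun γ => (um - us γ) - Real.sqrt (P γ / ρm)) l (𝓝 0) := by
    apply squeeze_zero_norm' (a := fun γ => Real.sqrt |(um - us γ) ^ 2 - P γ / ρm|)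
    · filter_upwards [hIoo] with γ hγ
      have h := aux_abs_sub_sqrt (x := um - us γ) (y := Real.sqrt (P γ / ρm))
        (by linarith [(hmid γ hγ).2]) (Real.sqrt_nonneg _)
      rw [Real.sq_sqrt (div_nonneg (hPnn γ hγ) hρm.le)] at h
      rw [Real.norm_eq_abs]
      exact h
    · have h := (Real.continuous_sqrt.tendsto _).comp hA2.abs
      simpa [Function.comp_def] using h
  have hb' : Tendsto (fun γ => (us γ - up) - Real.sqrt (P γ / ρp)) l (𝓝 0) := by
    apply squeeze_zero_norm' (a := fun γ => Real.sqrt |(us γ - up) ^ 2 - P γ / ρp|)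
    · filter_upwards [hIoo] with γ hγ
      have h := aux_abs_sub_sqrt (x := us γ - up) (y := Real.sqrt (P γ / ρp))
        (by linarith [(hmid γ hγ).1]) (Real.sqrt_nonneg _)
      rw [Real.sq_sqrt (div_nonneg (hPnn γ hγ) hρp.le)] at h
      rw [Real.norm_eq_abs]
      exact h
    · have h := (Real.continuous_sqrt.tendsto _).comp hB2.abs
      simpa [Function.comp_def] using h
  -- conclude
  have hsum : Tendsto (fun γ => Real.sqrt (P γ / ρm) + Real.sqrt (P γ / ρp)) l (𝓝 (um - up)) := by
    have h := (tendsto_const_nhds (x := um - up) (f := l)).sub ha' |>.sub hb'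
    have h2 := h.congr (fun γ => by ring :
      ∀ γ, (um - up) - ((um - us γ) - Real.sqrt (P γ / ρm))
        - ((us γ - up) - Real.sqrt (P γ / ρp))
        = Real.sqrt (P γ / ρm) + Real.sqrt (P γ / ρp))
    simpa using h2
  have hsqm : 0 < Real.sqrt ρm := Real.sqrt_pos.2 hρm
  have hsqp : 0 < Real.sqrt ρp := Real.sqrt_pos.2 hρp
  have hsum2 : Tendsto (fun γ => Real.sqrt (P γ) * (1 / Real.sqrt ρm + 1 / Real.sqrt ρp)) l
      (𝓝 (um - up)) := by
    refine hsum.congr' ?_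
    filter_upwards [hIoo] with γ hγ
    rw [Real.sqrt_div (hPnn γ hγ), Real.sqrt_div (hPnn γ hγ)]
    ring
  have hs0 : 0 < 1 / Real.sqrt ρm + 1 / Real.sqrt ρp := by positivity
  have hsqP : Tendsto (fun γ => Real.sqrt (P γ)) l
      (𝓝 ((um - up) / (1 / Real.sqrt ρm + 1 / Real.sqrt ρp))) := by
    have h := hsum2.div_const (1 / Real.sqrt ρm + 1 / Real.sqrt ρp)
    refine h.congr fun γ => ?_
    field_simp
  have hPlim : Tendsto P l
      (𝓝 (((um - up) / (1 / Real.sqrt ρm + 1 / Real.sqrt ρp)) ^ 2)) := by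
    have h := hsqP.pow 2
    refine h.congr' ?_
    filter_upwards [hIoo] with γ hγ
    exact Real.sq_sqrt (hPnn γ hγ)
  have hval : ((um - up) / (1 / Real.sqrt ρm + 1 / Real.sqrt ρp)) ^ 2
      = (Real.sqrt (ρm * ρp) * (um - up) / (Real.sqrt ρm + Real.sqrt ρp)) ^ 2 := by
    rw [Real.sqrt_mul hρm.le]
    congr 1
    rw [div_eq_div_iff (by positivity) (by positivity)]
    field_simp
    ring
  rw [hval] at hPlim
  rw [← hPdef]
  exact hPlim
end

section
/- Under the stated hypotheses on the intermediate state, the two shock speeds σ̄_1(γ) = (ρ_*(γ)u_*(γ) − ρ_-u_-)/(ρ_*(γ) − ρ_-) and σ̄_2(γ) = (ρ_+u_+ − ρ_*(γ)u_*(γ))/(ρ_+ − ρ_*(γ)) and the intermediate velocity u_*(γ) have a common limit as γ → 1+: lim_{γ→1+} σ̄_1(γ) = lim_{γ→1+} σ̄_2(γ) = lim_{γ→1+} u_*(γ) = σ, where σ = (√ρ_- · u_- + √ρ_+ · u_+)/(√ρ_- + √ρ_+). -/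
open Filter Topology

private lemma aux_tz_mul {l : Filter ℝ} {f g : ℝ → ℝ} {C : ℝ}
    (hf : Tendsto f l (𝓝 0)) (hg : ∀ᶠ x in l, |g x| ≤ C) :
    Tendsto (fun x => f x * g x) l (𝓝 0) := by
  apply squeeze_zero_norm' (a := fun x => |f x| * C)
  · filter_upwards [hg] with x hx
    calc ‖f x * g x‖ = |f x| * |g x| := abs_mul _ _
      _ ≤ |f x| * C := mul_le_mul_of_nonneg_left hx (abs_nonneg _)
  · simpa using hf.abs.mul_const C

private lemma aux_rpow_le {x t s : ℝ} (hx : 0 < x) (ht0 : 0 ≤ t) (hts : t ≤ s) :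
    x ^ t ≤ max 1 (x ^ s) := by
  rcases le_total x 1 with h | h
  · exact le_max_of_le_left (Real.rpow_le_one hx.le h ht0)
  · exact le_max_of_le_right (Real.rpow_le_rpow_of_exponent_le h hts)

private lemma aux_min_le_rpow {x t : ℝ} (hx : 0 < x) (ht0 : 0 ≤ t) (ht1 : t ≤ 1) :
    min 1 x ≤ x ^ t := by
  rcases le_total x 1 with h | h
  · calc min 1 x ≤ x := min_le_right _ _
      _ = x ^ (1:ℝ) := (Real.rpow_one x).symm
      _ ≤ x ^ t := Real.rpow_le_rpow_of_exponent_ge hx h ht1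
  · calc min 1 x ≤ 1 := min_le_left _ _
      _ = x ^ (0:ℝ) := (Real.rpow_zero x).symm
      _ ≤ x ^ t := Real.rpow_le_rpow_of_exponent_le h ht0

private lemma aux_rpow_tendsto {x : ℝ} (hx : 0 < x) {l : Filter ℝ} {e : ℝ → ℝ} {c : ℝ}
    (he : Tendsto e l (𝓝 c)) : Tendsto (fun γ => x ^ e γ) l (𝓝 (x ^ c)) :=
  (Real.continuousAt_const_rpow hx.ne').tendsto.comp he

private lemma aux_bdd {l : Filter ℝ} {f : ℝ → ℝ} {c : ℝ} (hf : Tendsto f l (𝓝 c)) :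
    ∀ᶠ x in l, |f x| ≤ |c| + 1 := by
  have h := Metric.tendsto_nhds.mp hf 1 one_pos
  filter_upwards [h] with x hx
  have h2 := abs_sub_abs_le_abs_sub (f x) c
  rw [Real.dist_eq] at hx
  linarith

private lemma aux_small {l : Filter ℝ} {f : ℝ → ℝ} (hf : Tendsto f l (𝓝 0)) {ε : ℝ}
    (hε : 0 < ε) : ∀ᶠ x in l, |f x| ≤ ε := by
  have h := Metric.tendsto_nhds.mp hf ε hε
  filter_upwards [h] with x hx
  rw [Real.dist_eq, sub_zero] at hx
  exact hx.le

set_option maxHeartbeats 1000000 in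
/-- A priori bound: `(γ-1) * ρ_*` stays bounded as `γ → 1⁺`. -/
private lemma aux_bound (γ R U P Pm Qm ρm cm Cm p0 up um K : ℝ)
    (hγ1' : 1 < γ) (hγ2 : γ < 2) (hρm : 0 < ρm) (hup : 0 < up) (hum : 0 < um)
    (hu : up < um) (hRm : ρm < R) (hU1 : up < U) (hU2 : U < um)
    (hP0 : 0 < P) (hPm0 : 0 < Pm) (hPm_le : Pm ≤ cm) (hQm_le : Qm ≤ Cm) (hQm0 : 0 < Qm)
    (hPge : p0 ≤ P) (hp0 : 0 < p0)
    (hKdef : K = 2*(um-up)^2*ρm + (um-up)*cm*ρm + Cm*um)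
    (e1 : γ*(um-U)^2*(ρm*R) = (γ-1)*(R-ρm)*(P*R*U - Qm*um) + (um-U)*(P - Pm)*(ρm*R)) :
    (γ-1)*R ≤ K/(p0*up) + ρm := by
  have hR0 : 0 < R := lt_trans hρm hRm
  have hw1 : 0 < γ - 1 := by linarith
  have hw2 : γ - 1 ≤ 1 := by linarith
  have humup : 0 < um - up := by linarith
  have h1 : (γ-1)*(R-ρm)*(P*(R*U)) = γ*(um-U)^2*(ρm*R)
      - (um-U)*(P - Pm)*(ρm*R) + (γ-1)*(R-ρm)*(Qm*um) := by
    linear_combination -e1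
  have hsql : (um-U)^2 ≤ (um-up)^2 := by nlinarith
  have hb1 : γ*(um-U)^2*(ρm*R) ≤ 2*(um-up)^2*(ρm*R) := by
    linarith [mul_nonneg (mul_nonneg (by linarith : (0:ℝ) ≤ 2-γ) (sq_nonneg (um-U)))
        (mul_pos hρm hR0).le,
      mul_nonneg (sub_nonneg.mpr hsql) (mul_pos hρm hR0).le]
  have t1 : 0 ≤ (um - U)*P*(ρm*R) :=
    mul_nonneg (mul_nonneg (by linarith) hP0.le) (mul_pos hρm hR0).le
  have t2 : (um - U)*Pm ≤ (um-up)*cm :=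
    mul_le_mul (by linarith) hPm_le hPm0.le (by linarith)
  have t2' : (um - U)*Pm*(ρm*R) ≤ (um-up)*cm*(ρm*R) :=
    mul_le_mul_of_nonneg_right t2 (mul_pos hρm hR0).le
  have hb2 : -((um-U)*(P - Pm)*(ρm*R)) ≤ (um-up)*cm*(ρm*R) := by
    linarith [t1, t2']
  have u1 : (γ-1)*(R-ρm) ≤ R := by
    have h9 := mul_le_mul_of_nonneg_right hw2 (by linarith : (0:ℝ) ≤ R-ρm)
    linarith [h9, hρm]
  have u2 : 0 ≤ Qm*um := mul_nonneg hQm0.le hum.le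
  have u3 : Qm*um ≤ Cm*um := mul_le_mul_of_nonneg_right hQm_le hum.le
  have hb3 : (γ-1)*(R - ρm)*(Qm*um) ≤ Cm*um*R := by
    linarith [mul_le_mul_of_nonneg_right u1 u2, mul_le_mul_of_nonneg_left u3 hR0.le]
  have t5 : p0*up ≤ P*U := mul_le_mul hPge hU1.le hup.le hP0.le
  have t6 : 0 ≤ (γ-1)*(R-ρm)*R :=
    mul_nonneg (mul_nonneg hw1.le (by linarith)) hR0.le
  have hlow : (γ-1)*(R-ρm)*(p0*up)*R ≤ (γ-1)*(R-ρm)*(P*(R*U)) := by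
    linarith [mul_le_mul_of_nonneg_left t5 t6]
  have hfin1 : (γ-1)*(R-ρm)*(p0*up)*R ≤ K*R := by
    rw [hKdef]; linarith [h1, hb1, hb2, hb3, hlow]
  have hfin2 : (γ-1)*(R-ρm)*(p0*up) ≤ K := (mul_le_mul_iff_of_pos_right hR0).mp hfin1
  have hfin3 : (γ-1)*(R-ρm) ≤ K/(p0*up) := (le_div_iff₀ (mul_pos hp0 hup)).mpr hfin2
  have hfin4 : (γ-1)*ρm ≤ ρm := by
    have h9 := mul_le_mul_of_nonneg_right hw2 hρm.le
    linarith [h9]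
  linarith [hfin3, hfin4]

set_option maxHeartbeats 1000000 in
/-- The algebraic identity giving `ρ₋ A² - ρ₊ B²` as a sum of small terms. -/
private lemma aux_ident (γ R U P Pm Pp Qm Qp ρm ρp um up : ℝ)
    (hγ0 : γ ≠ 0) (hR0 : R ≠ 0)
    (e1 : γ*(um-U)^2*(ρm*R) = (γ-1)*(R-ρm)*(P*R*U - Qm*um) + (um-U)*(P - Pm)*(ρm*R))
    (e2 : γ*(U-up)^2*(ρp*R) = (γ-1)*(R-ρp)*(P*R*U - Qp*up) - (U-up)*(P - Pp)*(ρp*R)) :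
    ρm*(um-U)^2 - ρp*(U-up)^2 =
      (1/γ) * ((γ-1)*(P*U*(ρp-ρm)) + (γ-1)*((ρm/R - 1)*(Qm*um))
        + (γ-1)*((1 - ρp/R)*(Qp*up)) + (P - Pm)*(ρm*(um-U)) + (P - Pp)*(ρp*(U-up))) := by
  have hγR : γ*R ≠ 0 := mul_ne_zero hγ0 hR0
  have h : γ*R*(ρm*(um-U)^2 - ρp*(U-up)^2) = (γ-1)*(ρp-ρm)*(P*R*U)
      - (γ-1)*(R-ρm)*(Qm*um) + (γ-1)*(R-ρp)*(Qp*up)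
      + (um-U)*(P - Pm)*(ρm*R) + (U-up)*(P - Pp)*(ρp*R) := by
    linear_combination e1 - e2
  have hT : ((γ-1)*(P*U*(ρp-ρm)) + (γ-1)*((ρm/R - 1)*(Qm*um))
      + (γ-1)*((1 - ρp/R)*(Qp*up)) + (P - Pm)*(ρm*(um-U)) + (P - Pp)*(ρp*(U-up))) * R
      = (γ-1)*(ρp-ρm)*(P*R*U) - (γ-1)*(R-ρm)*(Qm*um) + (γ-1)*(R-ρp)*(Qp*up)
        + (um-U)*(P - Pm)*(ρm*R) + (U-up)*(P - Pp)*(ρp*R) := by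
    field_simp
    try ring
  apply mul_left_cancel₀ hγR
  have h2 : γ*R*((1/γ) * ((γ-1)*(P*U*(ρp-ρm)) + (γ-1)*((ρm/R - 1)*(Qm*um))
      + (γ-1)*((1 - ρp/R)*(Qp*up)) + (P - Pm)*(ρm*(um-U)) + (P - Pp)*(ρp*(U-up))))
      = ((γ-1)*(P*U*(ρp-ρm)) + (γ-1)*((ρm/R - 1)*(Qm*um))
        + (γ-1)*((1 - ρp/R)*(Qp*up)) + (P - Pm)*(ρm*(um-U)) + (P - Pp)*(ρp*(U-up))) * R := by
    field_simp
    try ring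
  rw [h2, hT]
  exact h

set_option maxHeartbeats 1000000 in
/-- Lower bound forcing `(γ-1) ρ_* → ∞`-type behaviour. -/
private lemma aux_low (γ R U P Pm Qm ρm um up a0 : ℝ)
    (hγ1 : 1 < γ) (hρm : 0 < ρm) (hRm : ρm < R) (hup : 0 < up) (hum : 0 < um)
    (hu : up < um) (hU1 : up < U) (hU2 : U < um) (hP0 : 0 < P) (hP2 : P ≤ 2)
    (hQm0 : 0 < Qm) (ha0 : 0 < a0) (hA : a0 ≤ um - U)
    (hPm : |P - Pm| ≤ a0^2/(2*(um-up)))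
    (e1 : γ*(um-U)^2*(ρm*R) = (γ-1)*(R-ρm)*(P*R*U - Qm*um) + (um-U)*(P - Pm)*(ρm*R)) :
    a0^2*ρm/(4*um) ≤ (γ-1)*R := by
  have hR0 : 0 < R := lt_trans hρm hRm
  have hw1 : 0 < γ - 1 := by linarith
  have humup : 0 < um - up := by linarith
  have hA0 : 0 < um - U := by linarith
  have h1 : (γ-1)*(R-ρm)*(P*(R*U)) = γ*(um-U)^2*(ρm*R)
      - (um-U)*(P - Pm)*(ρm*R) + (γ-1)*(R-ρm)*(Qm*um) := by
    linear_combination -e1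
  have hq : 0 ≤ (γ-1)*(R-ρm)*(Qm*um) :=
    mul_nonneg (mul_nonneg hw1.le (by linarith)) (mul_nonneg hQm0.le hum.le)
  have heq : (um-up)*(a0^2/(2*(um-up))) = a0^2/2 := by
    field_simp
    try ring
  have t0 : (um-U)*(P - Pm) ≤ a0^2/2 := by
    calc (um-U)*(P-Pm) ≤ (um-U)*|P-Pm| :=
          mul_le_mul_of_nonneg_left (le_abs_self _) hA0.le
      _ ≤ (um-up)*(a0^2/(2*(um-up))) :=
          mul_le_mul (by linarith) hPm (abs_nonneg _) humup.le
      _ = a0^2/2 := heq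
  have t0' : (um-U)*(P - Pm)*(ρm*R) ≤ a0^2/2*(ρm*R) :=
    mul_le_mul_of_nonneg_right t0 (mul_pos hρm hR0).le
  have hγA : 1*(um-U)^2*(ρm*R) ≤ γ*(um-U)^2*(ρm*R) :=
    mul_le_mul_of_nonneg_right
      (mul_le_mul_of_nonneg_right (by linarith : (1:ℝ) ≤ γ) (sq_nonneg _))
      (mul_pos hρm hR0).le
  have hAa : a0^2*(ρm*R) ≤ (um-U)^2*(ρm*R) :=
    mul_le_mul_of_nonneg_right (pow_le_pow_left₀ ha0.le hA 2) (mul_pos hρm hR0).le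
  have hstep : a0^2/2*(ρm*R) ≤ (γ-1)*(R-ρm)*(P*(R*U)) := by
    linarith [h1, hq, t0', hγA, hAa]
  have hdiv : a0^2/2*ρm ≤ (γ-1)*(R-ρm)*(P*U) := by
    have h9 := (mul_le_mul_iff_of_pos_right hR0).mp
      (show a0^2/2*ρm*R ≤ ((γ-1)*(R-ρm)*(P*U))*R by linarith [hstep])
    linarith [h9]
  have hPU : P*U ≤ 2*um := mul_le_mul hP2 hU2.le (by linarith) (by linarith)
  have hw2 : 0 ≤ (γ-1)*(R-ρm) := mul_nonneg hw1.le (by linarith)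
  have hfin : a0^2/2*ρm ≤ (γ-1)*(R-ρm)*(2*um) :=
    le_trans hdiv (mul_le_mul_of_nonneg_left hPU hw2)
  rw [div_le_iff₀ (by positivity : (0:ℝ) < 4*um)]
  have h8 : 0 ≤ (γ-1)*ρm*um := mul_nonneg (mul_nonneg hw1.le hρm.le) hum.le
  linarith [hfin, h8]

set_option maxHeartbeats 4000000 in
/-- Under the hypotheses of the two-shock intermediate state of the perturbed
Aw–Rascle system, the two shock speeds
`σ̄_1(γ) = (ρ_*(γ)u_*(γ) − ρ_-u_-)/(ρ_*(γ) − ρ_-)`,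
`σ̄_2(γ) = (ρ_+u_+ − ρ_*(γ)u_*(γ))/(ρ_+ − ρ_*(γ))` and the intermediate velocity
`u_*(γ)` have the common limit `σ = (√ρ_- u_- + √ρ_+ u_+)/(√ρ_- + √ρ_+)` as `γ → 1+`. -/
theorem stmt14 (ρm ρp um up γb : ℝ) (hρm : 0 < ρm) (hρp : 0 < ρp)
    (hu : up < um) (hup : 0 < up) (hγb1 : 1 < γb) (hγb3 : γb ≤ 3)
    (ρs us : ℝ → ℝ)
    (hρc : ContinuousOn ρs (Set.Ioo 1 γb)) (husc : ContinuousOn us (Set.Ioo 1 γb))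
    (hbig : ∀ γ ∈ Set.Ioo (1 : ℝ) γb, max ρm ρp < ρs γ)
    (hmid : ∀ γ ∈ Set.Ioo (1 : ℝ) γb, up < us γ ∧ us γ < um)
    (hRH1 : ∀ γ ∈ Set.Ioo (1 : ℝ) γb,
      us γ - um = -Real.sqrt ((1 / γ) *
        ((γ - 1) * (1 / ρm - 1 / ρs γ) * (ρs γ ^ γ * us γ - ρm ^ γ * um)
          + (um - us γ) * (ρs γ ^ (γ - 1) - ρm ^ (γ - 1)))))
    (hRH2 : ∀ γ ∈ Set.Ioo (1 : ℝ) γb,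
      up - us γ = -Real.sqrt ((1 / γ) *
        ((γ - 1) * (1 / ρs γ - 1 / ρp) * (ρp ^ γ * up - ρs γ ^ γ * us γ)
          + (us γ - up) * (ρp ^ (γ - 1) - ρs γ ^ (γ - 1))))) :
    Tendsto (fun γ : ℝ => (ρs γ * us γ - ρm * um) / (ρs γ - ρm)) (𝓝[>] 1)
      (𝓝 ((Real.sqrt ρm * um + Real.sqrt ρp * up) / (Real.sqrt ρm + Real.sqrt ρp))) ∧
    Tendsto (fun γ : ℝ => (ρp * up - ρs γ * us γ) / (ρp - ρs γ)) (𝓝[>] 1)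
      (𝓝 ((Real.sqrt ρm * um + Real.sqrt ρp * up) / (Real.sqrt ρm + Real.sqrt ρp))) ∧
    Tendsto us (𝓝[>] 1)
      (𝓝 ((Real.sqrt ρm * um + Real.sqrt ρp * up) / (Real.sqrt ρm + Real.sqrt ρp))) := by
  clear hρc husc
  have hum : 0 < um := lt_trans hup hu
  have humup : (0:ℝ) < um - up := sub_pos.mpr hu
  set l : Filter ℝ := 𝓝[>] (1:ℝ) with hldef
  have hmem : Set.Ioo (1:ℝ) γb ∈ l := Ioo_mem_nhdsGT hγb1
  have hmem2 : Set.Ioo (1:ℝ) (min γb 2) ∈ l :=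
    Ioo_mem_nhdsGT (lt_min hγb1 one_lt_two)
  -- squared and cleared Rankine–Hugoniot relations
  have key1 : ∀ γ ∈ Set.Ioo (1:ℝ) γb,
      γ * (um - us γ)^2 * (ρm * ρs γ) =
        (γ - 1) * (ρs γ - ρm) * (ρs γ ^ (γ-1) * ρs γ * us γ - ρm ^ γ * um)
        + (um - us γ) * (ρs γ ^ (γ - 1) - ρm ^ (γ - 1)) * (ρm * ρs γ) := by
    intro γ hγ
    have hγ0 : (0:ℝ) < γ := lt_trans one_pos hγ.1
    have hR0 : (0:ℝ) < ρs γ := lt_trans hρp (lt_of_le_of_lt (le_max_right _ _) (hbig γ hγ))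
    have hPeq : ρs γ ^ γ = ρs γ ^ (γ-1) * ρs γ := by
      have h : ρs γ ^ ((γ-1) + 1) = ρs γ ^ (γ-1) * ρs γ ^ (1:ℝ) := Real.rpow_add hR0 _ _
      rw [Real.rpow_one] at h
      rw [show (γ-1) + 1 = γ by ring] at h
      rw [h]
    have hA : 0 < um - us γ := sub_pos.mpr (hmid γ hγ).2
    have h := hRH1 γ hγ
    set a := (1 / γ) * ((γ - 1) * (1 / ρm - 1 / ρs γ) * (ρs γ ^ γ * us γ - ρm ^ γ * um)
        + (um - us γ) * (ρs γ ^ (γ - 1) - ρm ^ (γ - 1))) with ha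
    have hs : Real.sqrt a = um - us γ := by linarith
    have ha0 : 0 ≤ a := by
      by_contra h'
      push_neg at h'
      rw [Real.sqrt_eq_zero_of_nonpos h'.le] at hs
      linarith
    have hsq : (um - us γ)^2 = a := by rw [← hs, Real.sq_sqrt ha0]
    rw [hsq, ha, hPeq]
    field_simp
  have key2 : ∀ γ ∈ Set.Ioo (1:ℝ) γb,
      γ * (us γ - up)^2 * (ρp * ρs γ) =
        (γ - 1) * (ρs γ - ρp) * (ρs γ ^ (γ-1) * ρs γ * us γ - ρp ^ γ * up)
        - (us γ - up) * (ρs γ ^ (γ - 1) - ρp ^ (γ - 1)) * (ρp * ρs γ) := by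
    intro γ hγ
    have hγ0 : (0:ℝ) < γ := lt_trans one_pos hγ.1
    have hR0 : (0:ℝ) < ρs γ := lt_trans hρp (lt_of_le_of_lt (le_max_right _ _) (hbig γ hγ))
    have hPeq : ρs γ ^ γ = ρs γ ^ (γ-1) * ρs γ := by
      have h : ρs γ ^ ((γ-1) + 1) = ρs γ ^ (γ-1) * ρs γ ^ (1:ℝ) := Real.rpow_add hR0 _ _
      rw [Real.rpow_one] at h
      rw [show (γ-1) + 1 = γ by ring] at h
      rw [h]
    have hB : 0 < us γ - up := sub_pos.mpr (hmid γ hγ).1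
    have h := hRH2 γ hγ
    set a := (1 / γ) * ((γ - 1) * (1 / ρs γ - 1 / ρp) * (ρp ^ γ * up - ρs γ ^ γ * us γ)
        + (us γ - up) * (ρp ^ (γ - 1) - ρs γ ^ (γ - 1))) with ha
    have hs : Real.sqrt a = us γ - up := by linarith
    have ha0 : 0 ≤ a := by
      by_contra h'
      push_neg at h'
      rw [Real.sqrt_eq_zero_of_nonpos h'.le] at hs
      linarith
    have hsq : (us γ - up)^2 = a := by rw [← hs, Real.sq_sqrt ha0]
    rw [hsq, ha, hPeq]
    field_simp
    ring
  -- elementary limits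
  have hγ1 : Tendsto (fun γ : ℝ => γ) l (𝓝 1) := tendsto_id.mono_left nhdsWithin_le_nhds
  have hw0 : Tendsto (fun γ : ℝ => γ - 1) l (𝓝 0) := by
    simpa using hγ1.sub_const 1
  have hw0' : Tendsto (fun γ : ℝ => γ - 1) l (𝓝[>] 0) := by
    rw [tendsto_nhdsWithin_iff]
    refine ⟨hw0, ?_⟩
    filter_upwards [hmem] with γ hγ
    exact sub_pos.mpr hγ.1
  have hQm : Tendsto (fun γ : ℝ => ρm ^ γ) l (𝓝 ρm) := by
    simpa [Real.rpow_one] using aux_rpow_tendsto hρm hγ1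
  have hQp : Tendsto (fun γ : ℝ => ρp ^ γ) l (𝓝 ρp) := by
    simpa [Real.rpow_one] using aux_rpow_tendsto hρp hγ1
  have hPm : Tendsto (fun γ : ℝ => ρm ^ (γ - 1)) l (𝓝 1) := by
    simpa [Real.rpow_zero] using aux_rpow_tendsto hρm hw0
  have hPp : Tendsto (fun γ : ℝ => ρp ^ (γ - 1)) l (𝓝 1) := by
    simpa [Real.rpow_zero] using aux_rpow_tendsto hρp hw0
  -- constants
  set Cm : ℝ := max 1 (ρm ^ (2:ℝ)) with hCmdef
  have hCm0 : (0:ℝ) < Cm := lt_of_lt_of_le one_pos (le_max_left _ _)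
  set cm : ℝ := max 1 ρm with hcmdef
  have hcm0 : (0:ℝ) < cm := lt_of_lt_of_le one_pos (le_max_left _ _)
  set p0 : ℝ := min 1 ρp with hp0def
  have hp0 : (0:ℝ) < p0 := lt_min one_pos hρp
  set K : ℝ := 2*(um-up)^2*ρm + (um-up)*cm*ρm + Cm*um with hKdef
  have hK0 : 0 < K := by
    have h1 : 0 < 2*(um-up)^2*ρm := by positivity
    have h2 : 0 < (um-up)*cm*ρm := by positivity
    have h3 : 0 < Cm*um := by positivity
    linarith
  set M : ℝ := K/(p0*up) + ρm with hMdef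
  have hM0 : 0 < M := add_pos (div_pos hK0 (mul_pos hp0 hup)) hρm
  -- a priori bound on (γ-1) ρ_*
  have hMbd : ∀ᶠ γ in l, (γ-1) * ρs γ ≤ M := by
    filter_upwards [hmem2] with γ hγ
    obtain ⟨hγ1', hγlt⟩ := hγ
    have hγb' : γ < γb := lt_of_lt_of_le hγlt (min_le_left _ _)
    have hγ2 : γ < 2 := lt_of_lt_of_le hγlt (min_le_right _ _)
    have hγIoo : γ ∈ Set.Ioo (1:ℝ) γb := ⟨hγ1', hγb'⟩
    have hγ0 : (0:ℝ) < γ := lt_trans one_pos hγ1'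
    have hRm : ρm < ρs γ := lt_of_le_of_lt (le_max_left _ _) (hbig γ hγIoo)
    have hRp : ρp < ρs γ := lt_of_le_of_lt (le_max_right _ _) (hbig γ hγIoo)
    have hR0 : (0:ℝ) < ρs γ := lt_trans hρp hRp
    have hw1 : 0 < γ - 1 := sub_pos.mpr hγ1'
    have hw2 : γ - 1 ≤ 1 := by linarith
    have hU := hmid γ hγIoo
    have hP0 : 0 < ρs γ ^ (γ-1) := Real.rpow_pos_of_pos hR0 _
    have hPm0 : 0 < ρm ^ (γ-1) := Real.rpow_pos_of_pos hρm _
    have hQm0 : 0 < ρm ^ γ := Real.rpow_pos_of_pos hρm _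
    have hPm_le : ρm ^ (γ-1) ≤ cm := by
      have h := aux_rpow_le hρm hw1.le hw2
      rw [Real.rpow_one] at h
      rw [hcmdef]; exact h
    have hQm_le : ρm ^ γ ≤ Cm := by
      rw [hCmdef]; exact aux_rpow_le hρm hγ0.le (by linarith)
    have hPge : p0 ≤ ρs γ ^ (γ-1) := by
      have h := aux_min_le_rpow hR0 hw1.le hw2
      have h2 : p0 ≤ min 1 (ρs γ) := by
        rw [hp0def]; exact min_le_min (le_refl 1) hRp.le
      exact le_trans h2 h
    have e1 : γ*(um-us γ)^2*(ρm*ρs γ) = (γ-1)*(ρs γ-ρm)*(ρs γ ^ (γ-1)*ρs γ*us γ - ρm^γ*um)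
        + (um-us γ)*(ρs γ ^ (γ-1) - ρm^(γ-1))*(ρm*ρs γ) := by
      have := key1 γ hγIoo
      linarith [this]
    rw [hMdef]
    exact aux_bound γ (ρs γ) (us γ) (ρs γ ^ (γ-1)) (ρm ^ (γ-1)) (ρm ^ γ) ρm cm Cm p0 up um K
      hγ1' hγ2 hρm hup hum hu hRm hU.1 hU.2 hP0 hPm0 hPm_le hQm_le hQm0 hPge hp0 hKdef e1
  -- (γ-1) log(γ-1) → 0
  have hxlogx : Tendsto (fun γ : ℝ => (γ-1) * Real.log (γ-1)) l (𝓝 0) := by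
    have h := tendsto_log_mul_rpow_nhdsGT_zero (zero_lt_one)
    simp only [Real.rpow_one] at h
    have h2 := h.comp hw0'
    simp only [Function.comp_def] at h2
    exact h2.congr (fun γ => mul_comm _ _)
  -- (γ-1) log ρ_* → 0
  have hlog : Tendsto (fun γ : ℝ => (γ-1) * Real.log (ρs γ)) l (𝓝 0) := by
    have hlower : Tendsto (fun γ : ℝ => (γ-1) * Real.log ρp) l (𝓝 0) := by
      simpa using hw0.mul_const (Real.log ρp)
    have hupper : Tendsto (fun γ : ℝ => (γ-1) * Real.log M - (γ-1) * Real.log (γ-1)) l (𝓝 0) := by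
      simpa using (hw0.mul_const (Real.log M)).sub hxlogx
    refine tendsto_of_tendsto_of_tendsto_of_le_of_le' hlower hupper ?_ ?_
    · filter_upwards [hmem] with γ hγ
      have hRp : ρp < ρs γ := lt_of_le_of_lt (le_max_right _ _) (hbig γ hγ)
      have h9 := Real.log_le_log hρp hRp.le
      exact mul_le_mul_of_nonneg_left h9 (by linarith [hγ.1])
    · filter_upwards [hmem, hMbd] with γ hγ hMγ
      have hw1 : 0 < γ - 1 := sub_pos.mpr hγ.1
      have hR0 : (0:ℝ) < ρs γ := lt_trans hρp (lt_of_le_of_lt (le_max_right _ _) (hbig γ hγ))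
      have hRM : ρs γ ≤ M / (γ-1) := (le_div_iff₀ hw1).mpr (by linarith [hMγ])
      have hlog2 : Real.log (ρs γ) ≤ Real.log (M / (γ-1)) := Real.log_le_log hR0 hRM
      rw [Real.log_div hM0.ne' hw1.ne'] at hlog2
      have h9 := mul_le_mul_of_nonneg_left hlog2 hw1.le
      linarith [h9]
  -- ρ_* ^ (γ-1) → 1
  have hP : Tendsto (fun γ : ℝ => ρs γ ^ (γ-1)) l (𝓝 1) := by
    have h : Tendsto (fun γ : ℝ => Real.exp ((γ-1) * Real.log (ρs γ))) l (𝓝 1) := by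
      simpa [Function.comp_def] using (Real.continuous_exp.tendsto 0).comp hlog
    refine Tendsto.congr' ?_ h
    filter_upwards [hmem] with γ hγ
    have hR0 : (0:ℝ) < ρs γ := lt_trans hρp (lt_of_le_of_lt (le_max_right _ _) (hbig γ hγ))
    rw [Real.rpow_def_of_pos hR0, mul_comm]
  -- the difference ρ₋ A² - ρ₊ B² tends to 0
  have hg0 : Tendsto (fun γ : ℝ => ρm*(um - us γ)^2 - ρp*(us γ - up)^2) l (𝓝 0) := by
    have h1 : Tendsto (fun γ : ℝ => (γ-1) * (ρs γ^(γ-1) * us γ * (ρp-ρm))) l (𝓝 0) := by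
      apply aux_tz_mul hw0 (C := (|(1:ℝ)|+1) * um * |ρp-ρm|)
      filter_upwards [hmem, aux_bdd hP] with γ hγ hPb
      have hU := hmid γ hγ
      have hU0 : 0 < us γ := lt_trans hup hU.1
      calc |ρs γ^(γ-1) * us γ * (ρp-ρm)| = |ρs γ^(γ-1)| * |us γ| * |ρp-ρm| := by
            rw [abs_mul, abs_mul]
        _ ≤ (|(1:ℝ)|+1) * um * |ρp-ρm| := by
            apply mul_le_mul_of_nonneg_right _ (abs_nonneg _)
            apply mul_le_mul hPb _ (abs_nonneg _) (by positivity)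
            rw [abs_of_pos hU0]; exact hU.2.le
    have h2 : Tendsto (fun γ : ℝ => (γ-1) * ((ρm/ρs γ - 1) * (ρm^γ * um))) l (𝓝 0) := by
      apply aux_tz_mul hw0 (C := 1 * ((|ρm|+1) * |um|))
      filter_upwards [hmem, aux_bdd hQm] with γ hγ hQb
      have hRm : ρm < ρs γ := lt_of_le_of_lt (le_max_left _ _) (hbig γ hγ)
      have hR0 : (0:ℝ) < ρs γ := lt_trans hρm hRm
      have hfrac : |ρm/ρs γ - 1| ≤ 1 := by
        rw [abs_le]
        constructor
        · have : 0 < ρm/ρs γ := div_pos hρm hR0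
          linarith
        · have : ρm/ρs γ ≤ 1 := (div_le_one hR0).mpr hRm.le
          linarith
      rw [abs_mul]
      apply mul_le_mul hfrac _ (abs_nonneg _) one_pos.le
      rw [abs_mul]
      exact mul_le_mul_of_nonneg_right hQb (abs_nonneg _)
    have h3 : Tendsto (fun γ : ℝ => (γ-1) * ((1 - ρp/ρs γ) * (ρp^γ * up))) l (𝓝 0) := by
      apply aux_tz_mul hw0 (C := 1 * ((|ρp|+1) * |up|))
      filter_upwards [hmem, aux_bdd hQp] with γ hγ hQb
      have hRp : ρp < ρs γ := lt_of_le_of_lt (le_max_right _ _) (hbig γ hγ)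
      have hR0 : (0:ℝ) < ρs γ := lt_trans hρp hRp
      have hfrac : |1 - ρp/ρs γ| ≤ 1 := by
        rw [abs_le]
        constructor
        · have : ρp/ρs γ ≤ 1 := (div_le_one hR0).mpr hRp.le
          linarith
        · have : 0 < ρp/ρs γ := div_pos hρp hR0
          linarith
      rw [abs_mul]
      apply mul_le_mul hfrac _ (abs_nonneg _) one_pos.le
      rw [abs_mul]
      exact mul_le_mul_of_nonneg_right hQb (abs_nonneg _)
    have h4 : Tendsto (fun γ : ℝ => (ρs γ^(γ-1) - ρm^(γ-1)) * (ρm*(um - us γ))) l (𝓝 0) := by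
      apply aux_tz_mul (by simpa using hP.sub hPm) (C := ρm*(um-up))
      filter_upwards [hmem] with γ hγ
      have hU := hmid γ hγ
      have h9 : 0 ≤ um - us γ := by linarith [hU.2]
      rw [abs_mul, abs_of_pos hρm, abs_of_nonneg h9]
      apply mul_le_mul_of_nonneg_left (by linarith [hU.1]) hρm.le
    have h5 : Tendsto (fun γ : ℝ => (ρs γ^(γ-1) - ρp^(γ-1)) * (ρp*(us γ - up))) l (𝓝 0) := by
      apply aux_tz_mul (by simpa using hP.sub hPp) (C := ρp*(um-up))
      filter_upwards [hmem] with γ hγ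
      have hU := hmid γ hγ
      have h9 : 0 ≤ us γ - up := by linarith [hU.1]
      rw [abs_mul, abs_of_pos hρp, abs_of_nonneg h9]
      apply mul_le_mul_of_nonneg_left (by linarith [hU.2]) hρp.le
    have hsum := (((h1.add h2).add h3).add h4).add h5
    have hinv : Tendsto (fun γ : ℝ => 1/γ) l (𝓝 1) := by
      have := hγ1.inv₀ one_ne_zero
      simpa [one_div] using this
    have hmul := hinv.mul hsum
    rw [show (1:ℝ)*(0+0+0+0+0) = 0 by norm_num] at hmul
    refine Tendsto.congr' ?_ hmul
    filter_upwards [hmem] with γ hγ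
    have hγ0 : (0:ℝ) < γ := lt_trans one_pos hγ.1
    have hR0 : (0:ℝ) < ρs γ := lt_trans hρp (lt_of_le_of_lt (le_max_right _ _) (hbig γ hγ))
    have e1 : γ*(um-us γ)^2*(ρm*ρs γ) = (γ-1)*(ρs γ-ρm)*(ρs γ ^ (γ-1)*ρs γ*us γ - ρm^γ*um)
        + (um-us γ)*(ρs γ ^ (γ-1) - ρm^(γ-1))*(ρm*ρs γ) := by
      linarith [key1 γ hγ]
    have e2 : γ*(us γ-up)^2*(ρp*ρs γ) = (γ-1)*(ρs γ-ρp)*(ρs γ ^ (γ-1)*ρs γ*us γ - ρp^γ*up)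
        - (us γ-up)*(ρs γ ^ (γ-1) - ρp^(γ-1))*(ρp*ρs γ) := by
      linarith [key2 γ hγ]
    exact (aux_ident γ (ρs γ) (us γ) (ρs γ ^ (γ-1)) (ρm ^ (γ-1)) (ρp ^ (γ-1)) (ρm ^ γ)
      (ρp ^ γ) ρm ρp um up hγ0.ne' hR0.ne' e1 e2).symm
  -- the intermediate velocity tends to σ
  set sm : ℝ := Real.sqrt ρm with hsmdef
  set sp : ℝ := Real.sqrt ρp with hspdef
  have hsm0 : 0 < sm := Real.sqrt_pos.mpr hρm
  have hsp0 : 0 < sp := Real.sqrt_pos.mpr hρp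
  have hsm2 : sm*sm = ρm := Real.mul_self_sqrt hρm.le
  have hsp2 : sp*sp = ρp := Real.mul_self_sqrt hρp.le
  have hssum : (0:ℝ) < sm + sp := by linarith
  set σ : ℝ := (sm*um + sp*up)/(sm+sp) with hσdef
  have ht : Tendsto (fun γ : ℝ => sm*(um - us γ) - sp*(us γ - up)) l (𝓝 0) := by
    set m0 : ℝ := min sm sp with hm0def
    have hm00 : 0 < m0 := lt_min hsm0 hsp0
    have hDpos : 0 < m0*(um-up) := mul_pos hm00 humup
    apply squeeze_zero_norm'
      (a := fun γ => |ρm*(um - us γ)^2 - ρp*(us γ - up)^2| / (m0*(um-up)))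
    · filter_upwards [hmem] with γ hγ
      have hU := hmid γ hγ
      have hA : 0 < um - us γ := by linarith [hU.2]
      have hB : 0 < us γ - up := by linarith [hU.1]
      have hD : m0*(um-up) ≤ sm*(um - us γ) + sp*(us γ - up) := by
        have h1 : m0*(um - us γ) ≤ sm*(um-us γ) :=
          mul_le_mul_of_nonneg_right (min_le_left _ _) hA.le
        have h2 : m0*(us γ - up) ≤ sp*(us γ - up) :=
          mul_le_mul_of_nonneg_right (min_le_right _ _) hB.le
        linarith [h1, h2]
      have hprod : (sm*(um - us γ) - sp*(us γ - up)) * (sm*(um - us γ) + sp*(us γ - up))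
          = ρm*(um - us γ)^2 - ρp*(us γ - up)^2 := by
        linear_combination ((um - us γ)^2) * hsm2 - ((us γ - up)^2) * hsp2
      rw [Real.norm_eq_abs, le_div_iff₀ hDpos]
      calc |sm*(um - us γ) - sp*(us γ - up)| * (m0*(um-up))
          ≤ |sm*(um - us γ) - sp*(us γ - up)| * (sm*(um - us γ) + sp*(us γ - up)) :=
            mul_le_mul_of_nonneg_left hD (abs_nonneg _)
        _ = |sm*(um - us γ) - sp*(us γ - up)| * |sm*(um - us γ) + sp*(us γ - up)| := by
            rw [abs_of_pos (lt_of_lt_of_le hDpos hD)]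
        _ = |(sm*(um-us γ) - sp*(us γ-up)) * (sm*(um-us γ)+sp*(us γ-up))| := (abs_mul _ _).symm
        _ = |ρm*(um - us γ)^2 - ρp*(us γ - up)^2| := by rw [hprod]
    · simpa using hg0.abs.div_const (m0*(um-up))
  have hus : Tendsto us l (𝓝 σ) := by
    have h := (tendsto_const_nhds (x := sm*um + sp*up) (f := l)).sub ht
    have h2 := h.div_const (sm+sp)
    rw [sub_zero] at h2
    rw [hσdef]
    refine Tendsto.congr ?_ h2
    intro γ
    rw [div_eq_iff hssum.ne']
    ring
  -- position of σ
  have hσum : σ < um := by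
    rw [hσdef, div_lt_iff₀ hssum]
    have h9 : sp*up < sp*um := mul_lt_mul_of_pos_left hu hsp0
    linarith [h9]
  have hσup : up < σ := by
    rw [hσdef, lt_div_iff₀ hssum]
    have h9 : sm*up < sm*um := mul_lt_mul_of_pos_left hu hsm0
    linarith [h9]
  have hσ0 : 0 < σ := lt_trans hup hσup
  -- ρ_* tends to infinity
  set a0 : ℝ := (um - σ)/2 with ha0def
  have ha0 : 0 < a0 := by rw [ha0def]; linarith [hσum]
  have hAev : ∀ᶠ γ in l, a0 ≤ um - us γ := by
    have h9 : Tendsto (fun γ : ℝ => us γ - σ) l (𝓝 0) := by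
      simpa using hus.sub_const σ
    filter_upwards [aux_small h9 ha0] with γ hγ
    rw [abs_le] at hγ
    rw [ha0def] at hγ ⊢
    linarith [hγ.1, hγ.2]
  have hAev' : ∀ᶠ γ in l, a0 ≤ um - us γ := hAev
  have hPm2 : ∀ᶠ γ in l, |ρs γ ^ (γ-1) - ρm ^ (γ-1)| ≤ a0^2/(2*(um-up)) := by
    have h9 : Tendsto (fun γ : ℝ => ρs γ ^ (γ-1) - ρm ^ (γ-1)) l (𝓝 0) := by
      simpa using hP.sub hPm
    exact aux_small h9 (by positivity)
  have hP2 : ∀ᶠ γ in l, ρs γ ^ (γ-1) ≤ 2 := by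
    have h9 : Tendsto (fun γ : ℝ => ρs γ ^ (γ-1) - 1) l (𝓝 0) := by
      simpa using hP.sub_const 1
    filter_upwards [aux_small h9 one_pos] with γ hγ
    rw [abs_le] at hγ
    linarith [hγ.2]
  set c0 : ℝ := a0^2*ρm/(4*um) with hc0def
  have hc00 : 0 < c0 := by rw [hc0def]; positivity
  have hlowev : ∀ᶠ γ in l, c0 ≤ (γ-1) * ρs γ := by
    filter_upwards [hmem, hAev, hPm2, hP2] with γ hγ hA2 hPm2 hP2'
    have hγ0 : (0:ℝ) < γ := lt_trans one_pos hγ.1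
    have hRm : ρm < ρs γ := lt_of_le_of_lt (le_max_left _ _) (hbig γ hγ)
    have hRp : ρp < ρs γ := lt_of_le_of_lt (le_max_right _ _) (hbig γ hγ)
    have hR0 : (0:ℝ) < ρs γ := lt_trans hρp hRp
    have hU := hmid γ hγ
    have hP0 : 0 < ρs γ ^ (γ-1) := Real.rpow_pos_of_pos hR0 _
    have hQm0 : 0 < ρm ^ γ := Real.rpow_pos_of_pos hρm _
    have e1 : γ*(um-us γ)^2*(ρm*ρs γ) = (γ-1)*(ρs γ-ρm)*(ρs γ ^ (γ-1)*ρs γ*us γ - ρm^γ*um)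
        + (um-us γ)*(ρs γ ^ (γ-1) - ρm^(γ-1))*(ρm*ρs γ) := by
      linarith [key1 γ hγ]
    rw [hc0def]
    exact aux_low γ (ρs γ) (us γ) (ρs γ ^ (γ-1)) (ρm ^ (γ-1)) (ρm ^ γ) ρm um up a0
      hγ.1 hρm hRm hup hum hu hU.1 hU.2 hP0 hP2' hQm0 ha0 hA2 hPm2 e1
  have hρtop : Tendsto ρs l atTop := by
    have hcomp : Tendsto (fun γ : ℝ => c0 * (γ-1)⁻¹) l atTop :=
      (tendsto_inv_nhdsGT_zero.comp hw0').const_mul_atTop hc00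
    apply tendsto_atTop_mono' l ?_ hcomp
    filter_upwards [hmem, hlowev] with γ hγ hlow
    have hw1 : 0 < γ - 1 := sub_pos.mpr hγ.1
    rw [show c0 * (γ-1)⁻¹ = c0 / (γ-1) by rw [div_eq_mul_inv], div_le_iff₀ hw1]
    linarith [hlow]
  have hdm : Tendsto (fun γ : ℝ => ρs γ - ρm) l atTop := by
    have := tendsto_atTop_add_const_right l (-ρm) hρtop
    simpa [sub_eq_add_neg] using this
  have hdp : Tendsto (fun γ : ℝ => ρs γ - ρp) l atTop := by
    have := tendsto_atTop_add_const_right l (-ρp) hρtop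
    simpa [sub_eq_add_neg] using this
  have hinvm : Tendsto (fun γ : ℝ => (ρs γ - ρm)⁻¹) l (𝓝 0) := tendsto_inv_atTop_zero.comp hdm
  have hinvp : Tendsto (fun γ : ℝ => (ρs γ - ρp)⁻¹) l (𝓝 0) := tendsto_inv_atTop_zero.comp hdp
  -- first shock speed
  refine ⟨?_, ?_, hus⟩
  · have h := hus.add (((hus.sub_const um).const_mul ρm).mul hinvm)
    rw [mul_zero, add_zero] at h
    refine Tendsto.congr' ?_ h
    filter_upwards [hmem] with γ hγ
    have hRm : ρm < ρs γ := lt_of_le_of_lt (le_max_left _ _) (hbig γ hγ)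
    have hne : ρs γ - ρm ≠ 0 := by linarith
    field_simp
    ring
  · have h := hus.add (((hus.sub_const up).const_mul ρp).mul hinvp)
    rw [mul_zero, add_zero] at h
    refine Tendsto.congr' ?_ h
    filter_upwards [hmem] with γ hγ
    have hRp : ρp < ρs γ := lt_of_le_of_lt (le_max_right _ _) (hbig γ hγ)
    have hne : ρs γ - ρp ≠ 0 := by linarith
    have hne' : ρp - ρs γ ≠ 0 := by linarith
    field_simp
    ring
end

section
/- Under the stated hypotheses on the intermediate state, with σ̄_1(γ) = (ρ_*(γ)u_*(γ) − ρ_-u_-)/(ρ_*(γ) − ρ_-), σ̄_2(γ) = (ρ_+u_+ − ρ_*(γ)u_*(γ))/(ρ_+ − ρ_*(γ)) and σ = (√ρ_- · u_- + √ρ_+ · u_+)/(√ρ_- + √ρ_+), one has lim_{γ→1+} ∫_{σ̄_1(γ)}^{σ̄_2(γ)} ρ_*(γ) dξ = lim_{γ→1+} ρ_*(γ)(σ̄_2(γ) − σ̄_1(γ)) = σ(ρ_+ − ρ_-) − (ρ_+u_+ − ρ_-u_-) = √(ρ_-ρ_+)(u_- − u_+). -/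
open Filter Topology MeasureTheory

private lemma aux_eps15 : Filter.Tendsto (fun γ : ℝ => γ - 1) (𝓝[>] (1:ℝ)) (𝓝[>] 0) := by
  apply tendsto_nhdsWithin_of_tendsto_nhds_of_eventually_within
  · have h : Continuous (fun γ : ℝ => γ - 1) := by continuity
    have := h.tendsto 1
    norm_num at this
    exact this.mono_left nhdsWithin_le_nhds
  · filter_upwards [self_mem_nhdsWithin] with γ hγ
    simpa using hγ

private lemma aux_eps15' : Filter.Tendsto (fun γ : ℝ => γ - 1) (𝓝[>] (1:ℝ)) (𝓝 0) :=
  aux_eps15.mono_right nhdsWithin_le_nhds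

private lemma aux_id15 : Filter.Tendsto (fun γ : ℝ => γ) (𝓝[>] (1:ℝ)) (𝓝 1) :=
  tendsto_id.mono_left nhdsWithin_le_nhds

private lemma aux_crpow15 (c : ℝ) (hc : 0 < c) :
    Filter.Tendsto (fun γ : ℝ => c ^ (γ - 1)) (𝓝[>] (1:ℝ)) (𝓝 1) := by
  have hcont : Continuous (fun γ : ℝ => Real.exp (Real.log c * (γ - 1))) := by continuity
  have h := hcont.tendsto 1
  norm_num at h
  refine ((h.mono_left nhdsWithin_le_nhds).congr fun γ => ?_)
  rw [Real.rpow_def_of_pos hc]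

private lemma aux_crpow15' (c : ℝ) (hc : 0 < c) :
    Filter.Tendsto (fun γ : ℝ => c ^ γ) (𝓝[>] (1:ℝ)) (𝓝 c) := by
  have h := (aux_crpow15 c hc).mul_const c
  rw [one_mul] at h
  refine h.congr fun γ => ?_
  rw [← Real.rpow_add_one (ne_of_gt hc) (γ - 1), sub_add_cancel]

private lemma aux_pow_self15 (C : ℝ) (hC : 0 < C) :
    Filter.Tendsto (fun γ : ℝ => (C / (γ - 1)) ^ (γ - 1)) (𝓝[>] (1:ℝ)) (𝓝 1) := by
  have h1 : Filter.Tendsto (fun x : ℝ => (C / x) ^ x) (𝓝[>] 0) (𝓝 1) := by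
    have hlog : Filter.Tendsto (fun x : ℝ => Real.log (C / x) * x) (𝓝[>] 0) (𝓝 0) := by
      have h2 : Filter.Tendsto (fun x : ℝ => Real.log C * x - Real.log x * x) (𝓝[>] 0) (𝓝 0) := by
        have ha : Filter.Tendsto (fun x : ℝ => Real.log C * x) (𝓝[>] 0) (𝓝 0) := by
          have hcont : Continuous (fun x : ℝ => Real.log C * x) := by continuity
          have := hcont.tendsto 0
          norm_num at this
          exact this.mono_left nhdsWithin_le_nhds
        have hb := tendsto_log_mul_rpow_nhdsGT_zero (zero_lt_one)
        simp only [Real.rpow_one] at hb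
        simpa using ha.sub hb
      refine h2.congr' ?_
      filter_upwards [self_mem_nhdsWithin] with x hx
      rw [Real.log_div (ne_of_gt hC) (ne_of_gt hx)]
      ring
    have := (Real.continuous_exp.tendsto 0).comp hlog
    simp only [Real.exp_zero] at this
    refine this.congr' ?_
    filter_upwards [self_mem_nhdsWithin] with x hx
    rw [Function.comp_apply, Real.rpow_def_of_pos (div_pos hC hx), mul_comm]
  exact h1.comp aux_eps15

set_option maxHeartbeats 2000000 in
/-- Under the hypotheses of the two-shock intermediate state of the perturbed
Aw–Rascle system, with `σ̄_1(γ)`, `σ̄_2(γ)` the two shock speeds and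
`σ = (√ρ_- u_- + √ρ_+ u_+)/(√ρ_- + √ρ_+)`,
`lim_{γ→1+} ∫_{σ̄_1(γ)}^{σ̄_2(γ)} ρ_*(γ) dξ = lim_{γ→1+} ρ_*(γ)(σ̄_2(γ) − σ̄_1(γ))
 = σ(ρ_+ − ρ_-) − (ρ_+u_+ − ρ_-u_-) = √(ρ_-ρ_+)(u_- − u_+)`. -/
theorem stmt15 (ρm ρp um up γb : ℝ) (hρm : 0 < ρm) (hρp : 0 < ρp)
    (hu : up < um) (hup : 0 < up) (hγb1 : 1 < γb) (hγb3 : γb ≤ 3)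
    (ρs us : ℝ → ℝ)
    (hρc : ContinuousOn ρs (Set.Ioo 1 γb)) (husc : ContinuousOn us (Set.Ioo 1 γb))
    (hbig : ∀ γ ∈ Set.Ioo (1 : ℝ) γb, max ρm ρp < ρs γ)
    (hmid : ∀ γ ∈ Set.Ioo (1 : ℝ) γb, up < us γ ∧ us γ < um)
    (hRH1 : ∀ γ ∈ Set.Ioo (1 : ℝ) γb,
      us γ - um = -Real.sqrt ((1 / γ) *
        ((γ - 1) * (1 / ρm - 1 / ρs γ) * (ρs γ ^ γ * us γ - ρm ^ γ * um)
          + (um - us γ) * (ρs γ ^ (γ - 1) - ρm ^ (γ - 1)))))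
    (hRH2 : ∀ γ ∈ Set.Ioo (1 : ℝ) γb,
      up - us γ = -Real.sqrt ((1 / γ) *
        ((γ - 1) * (1 / ρs γ - 1 / ρp) * (ρp ^ γ * up - ρs γ ^ γ * us γ)
          + (us γ - up) * (ρp ^ (γ - 1) - ρs γ ^ (γ - 1))))) :
    Tendsto (fun γ : ℝ =>
        ∫ _ξ in ((ρs γ * us γ - ρm * um) / (ρs γ - ρm))..((ρp * up - ρs γ * us γ) / (ρp - ρs γ)),
          ρs γ)
      (𝓝[>] 1)
      (𝓝 (((Real.sqrt ρm * um + Real.sqrt ρp * up) / (Real.sqrt ρm + Real.sqrt ρp)) * (ρp - ρm)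
        - (ρp * up - ρm * um))) ∧
    Tendsto (fun γ : ℝ =>
        ρs γ * ((ρp * up - ρs γ * us γ) / (ρp - ρs γ) - (ρs γ * us γ - ρm * um) / (ρs γ - ρm)))
      (𝓝[>] 1)
      (𝓝 (((Real.sqrt ρm * um + Real.sqrt ρp * up) / (Real.sqrt ρm + Real.sqrt ρp)) * (ρp - ρm)
        - (ρp * up - ρm * um))) ∧
    ((Real.sqrt ρm * um + Real.sqrt ρp * up) / (Real.sqrt ρm + Real.sqrt ρp)) * (ρp - ρm)
        - (ρp * up - ρm * um) = Real.sqrt (ρm * ρp) * (um - up) := by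
  have hum : 0 < um := hup.trans hu
  have hμ : 0 < min ρm ρp := lt_min hρm hρp
  have ham : Real.sqrt ρm ^ 2 = ρm := Real.sq_sqrt hρm.le
  have hap : Real.sqrt ρp ^ 2 = ρp := Real.sq_sqrt hρp.le
  have hamp : 0 < Real.sqrt ρm := Real.sqrt_pos.2 hρm
  have happ : 0 < Real.sqrt ρp := Real.sqrt_pos.2 hρp
  have hsum : 0 < Real.sqrt ρm + Real.sqrt ρp := by linarith
  set σ : ℝ := (Real.sqrt ρm * um + Real.sqrt ρp * up) / (Real.sqrt ρm + Real.sqrt ρp) with hσdef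
  have hid : σ * (ρp - ρm) - (ρp * up - ρm * um) = Real.sqrt (ρm * ρp) * (um - up) := by
    rw [Real.sqrt_mul hρm.le, hσdef]
    field_simp
    linear_combination (-(um - up) * Real.sqrt ρm) * hap +
      (-(um - up) * Real.sqrt ρp) * ham
  have hσup : up < σ := by
    rw [hσdef, lt_div_iff₀ hsum]; nlinarith
  have hσum : σ < um := by
    rw [hσdef, div_lt_iff₀ hsum]; nlinarith
  have hIoo : ∀ᶠ γ in 𝓝[>] (1:ℝ), γ ∈ Set.Ioo (1:ℝ) γb :=
    Ioo_mem_nhdsGT_of_mem ⟨le_refl 1, hγb1⟩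
  -- squared Rankine-Hugoniot relations
  have hE : ∀ γ ∈ Set.Ioo (1:ℝ) γb,
      γ * (um - us γ)^2 = (γ-1) * (1/ρm - 1/ρs γ) * (ρs γ ^ γ * us γ - ρm ^ γ * um)
        + (um - us γ) * (ρs γ ^ (γ-1) - ρm ^ (γ-1))
      ∧ γ * (us γ - up)^2 = (γ-1) * (1/ρp - 1/ρs γ) * (ρs γ ^ γ * us γ - ρp ^ γ * up)
        - (us γ - up) * (ρs γ ^ (γ-1) - ρp ^ (γ-1)) := by
    intro γ hγ
    have hγ0 : (0:ℝ) < γ := by linarith [hγ.1]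
    obtain ⟨hu1, hu2⟩ := hmid γ hγ
    have hγne : γ ≠ 0 := ne_of_gt hγ0
    have hρmne : ρm ≠ 0 := ne_of_gt hρm
    have hρpne : ρp ≠ 0 := ne_of_gt hρp
    have hρsne : ρs γ ≠ 0 := by
      have h := hbig γ hγ
      have h2 : ρm ≤ max ρm ρp := le_max_left ρm ρp
      have : 0 < ρs γ := by linarith
      exact ne_of_gt this
    constructor
    · have h1 := hRH1 γ hγ
      have hs : Real.sqrt ((1 / γ) *
          ((γ - 1) * (1 / ρm - 1 / ρs γ) * (ρs γ ^ γ * us γ - ρm ^ γ * um)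
            + (um - us γ) * (ρs γ ^ (γ - 1) - ρm ^ (γ - 1)))) = um - us γ := by linarith
      have hX0 : 0 ≤ (1 / γ) *
          ((γ - 1) * (1 / ρm - 1 / ρs γ) * (ρs γ ^ γ * us γ - ρm ^ γ * um)
            + (um - us γ) * (ρs γ ^ (γ - 1) - ρm ^ (γ - 1))) := by
        by_contra hc
        push_neg at hc
        rw [Real.sqrt_eq_zero_of_nonpos hc.le] at hs
        linarith
      have hsq : (um - us γ)^2 = (1 / γ) *
          ((γ - 1) * (1 / ρm - 1 / ρs γ) * (ρs γ ^ γ * us γ - ρm ^ γ * um)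
            + (um - us γ) * (ρs γ ^ (γ - 1) - ρm ^ (γ - 1))) := by
        have h := Real.sq_sqrt hX0
        rw [hs] at h
        exact h
      rw [hsq]
      field_simp
    · have h2 := hRH2 γ hγ
      have hs : Real.sqrt ((1 / γ) *
          ((γ - 1) * (1 / ρs γ - 1 / ρp) * (ρp ^ γ * up - ρs γ ^ γ * us γ)
            + (us γ - up) * (ρp ^ (γ - 1) - ρs γ ^ (γ - 1)))) = us γ - up := by linarith
      have hX0 : 0 ≤ (1 / γ) *
          ((γ - 1) * (1 / ρs γ - 1 / ρp) * (ρp ^ γ * up - ρs γ ^ γ * us γ)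
            + (us γ - up) * (ρp ^ (γ - 1) - ρs γ ^ (γ - 1))) := by
        by_contra hc
        push_neg at hc
        rw [Real.sqrt_eq_zero_of_nonpos hc.le] at hs
        linarith
      have hsq : (us γ - up)^2 = (1 / γ) *
          ((γ - 1) * (1 / ρs γ - 1 / ρp) * (ρp ^ γ * up - ρs γ ^ γ * us γ)
            + (us γ - up) * (ρp ^ (γ - 1) - ρs γ ^ (γ - 1))) := by
        have h := Real.sq_sqrt hX0
        rw [hs] at h
        exact h
      rw [hsq]
      field_simp
      ring
  -- Step A : ρs → ∞
  have hA : Tendsto ρs (𝓝[>] (1:ℝ)) atTop := by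
    rw [tendsto_atTop]
    intro M0
    obtain ⟨M, hM0, hMm, hMp, hM1⟩ : ∃ M : ℝ, M0 ≤ M ∧ ρm ≤ M ∧ ρp ≤ M ∧ 1 ≤ M :=
      ⟨max M0 (max ρm (max ρp 1)), le_max_left _ _,
        le_trans (le_max_left _ _) (le_max_right _ _),
        le_trans (le_trans (le_max_left _ _) (le_max_right _ _)) (le_max_right _ _),
        le_trans (le_trans (le_max_right _ _) (le_max_right _ _)) (le_max_right _ _)⟩
    have hMpos : (0:ℝ) < M := lt_of_lt_of_le one_pos hM1
    have hM3pos : (0:ℝ) < M ^ (3:ℝ) := Real.rpow_pos_of_pos hMpos _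
    obtain ⟨K, hKpos, hKm, hKp⟩ : ∃ K : ℝ, 0 < K ∧ (1/ρm) * (M ^ (3:ℝ) * um) ≤ K ∧
        (1/ρp) * (M ^ (3:ℝ) * um) ≤ K := by
      refine ⟨2 * M ^ (3:ℝ) * um / (min ρm ρp), by positivity, ?_, ?_⟩
      · have h2 : 1/ρm ≤ 2/(min ρm ρp) := by
          rw [div_le_div_iff₀ hρm hμ]
          have := min_le_left ρm ρp
          linarith
        calc (1/ρm) * (M ^ (3:ℝ) * um) ≤ (2/(min ρm ρp)) * (M ^ (3:ℝ) * um) :=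
              mul_le_mul_of_nonneg_right h2 (by positivity)
          _ = 2 * M ^ (3:ℝ) * um / (min ρm ρp) := by ring
      · have h2 : 1/ρp ≤ 2/(min ρm ρp) := by
          rw [div_le_div_iff₀ hρp hμ]
          have := min_le_right ρm ρp
          linarith
        calc (1/ρp) * (M ^ (3:ℝ) * um) ≤ (2/(min ρm ρp)) * (M ^ (3:ℝ) * um) :=
              mul_le_mul_of_nonneg_right h2 (by positivity)
          _ = 2 * M ^ (3:ℝ) * um / (min ρm ρp) := by ring
    have hΔ : (0:ℝ) < um - up := by linarith
    have hlim : Tendsto (fun γ : ℝ => (γ - 1) * K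
        + (um - up) * (M ^ (γ-1) - (min ρm ρp) ^ (γ-1))) (𝓝[>] (1:ℝ)) (𝓝 0) := by
      have h1 := aux_eps15'.mul_const K
      have h2 := ((aux_crpow15 M hMpos).sub (aux_crpow15 _ hμ)).const_mul (um - up)
      have h3 := h1.add h2
      norm_num at h3
      exact h3
    have hev := hlim.eventually_lt_const (by positivity : (0:ℝ) < (um - up)^2/4)
    filter_upwards [hev, hIoo] with γ hγh hγin
    rcases le_or_gt M (ρs γ) with hcase | hcase
    · linarith
    exfalso
    obtain ⟨hE1, hE2⟩ := hE γ hγin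
    obtain ⟨hu1, hu2⟩ := hmid γ hγin
    have hbigγ := hbig γ hγin
    have hρsm : ρm < ρs γ := lt_of_le_of_lt (le_max_left _ _) hbigγ
    have hρsp : ρp < ρs γ := lt_of_le_of_lt (le_max_right _ _) hbigγ
    have hρspos : 0 < ρs γ := hρm.trans hρsm
    have hγ1 : 1 < γ := hγin.1
    have hγ3 : γ ≤ 3 := le_trans hγin.2.le hγb3
    have hε : 0 < γ - 1 := by linarith
    have husp : 0 < us γ := hup.trans hu1
    have hb1 : ρs γ ^ γ ≤ M ^ (3:ℝ) :=
      le_trans (Real.rpow_le_rpow hρspos.le hcase.le (by linarith))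
        (Real.rpow_le_rpow_of_exponent_le hM1 hγ3)
    have hPub : ρs γ ^ (γ-1) ≤ M ^ (γ-1) := Real.rpow_le_rpow hρspos.le hcase.le hε.le
    have hPm : (min ρm ρp) ^ (γ-1) ≤ ρm ^ (γ-1) :=
      Real.rpow_le_rpow hμ.le (min_le_left _ _) hε.le
    have hPmlb : ρm ^ (γ-1) ≤ ρs γ ^ (γ-1) := Real.rpow_le_rpow hρm.le hρsm.le hε.le
    have hPplb : ρp ^ (γ-1) ≤ ρs γ ^ (γ-1) := Real.rpow_le_rpow hρp.le hρsp.le hε.le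
    have hρmγpos : 0 < ρm ^ γ := Real.rpow_pos_of_pos hρm γ
    have hρpγpos : 0 < ρp ^ γ := Real.rpow_pos_of_pos hρp γ
    have hρsγpos : 0 < ρs γ ^ γ := Real.rpow_pos_of_pos hρspos γ
    have hx1 : ρs γ ^ γ * us γ - ρm ^ γ * um ≤ M ^ (3:ℝ) * um := by
      linarith [mul_le_mul hb1 hu2.le husp.le hM3pos.le, mul_pos hρmγpos hum]
    have hx2 : ρs γ ^ γ * us γ - ρp ^ γ * up ≤ M ^ (3:ℝ) * um := by
      linarith [mul_le_mul hb1 hu2.le husp.le hM3pos.le, mul_pos hρpγpos hup]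
    have ha0 : 0 ≤ 1/ρm - 1/ρs γ := by
      rw [sub_nonneg]
      exact one_div_le_one_div_of_le hρm hρsm.le
    have ha1 : 1/ρm - 1/ρs γ ≤ 1/ρm := by
      have : 0 < 1/ρs γ := by positivity
      linarith
    have hb0 : 0 ≤ 1/ρp - 1/ρs γ := by
      rw [sub_nonneg]
      exact one_div_le_one_div_of_le hρp hρsp.le
    have hb0' : 1/ρp - 1/ρs γ ≤ 1/ρp := by
      have : 0 < 1/ρs γ := by positivity
      linarith
    have hterm1 : (1/ρm - 1/ρs γ) * (ρs γ ^ γ * us γ - ρm ^ γ * um) ≤ K :=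
      calc (1/ρm - 1/ρs γ) * (ρs γ ^ γ * us γ - ρm ^ γ * um)
          ≤ (1/ρm - 1/ρs γ) * (M ^ (3:ℝ) * um) := mul_le_mul_of_nonneg_left hx1 ha0
        _ ≤ (1/ρm) * (M ^ (3:ℝ) * um) := mul_le_mul_of_nonneg_right ha1 (by positivity)
        _ ≤ K := hKm
    have hterm2 : (1/ρp - 1/ρs γ) * (ρs γ ^ γ * us γ - ρp ^ γ * up) ≤ K :=
      calc (1/ρp - 1/ρs γ) * (ρs γ ^ γ * us γ - ρp ^ γ * up)
          ≤ (1/ρp - 1/ρs γ) * (M ^ (3:ℝ) * um) := mul_le_mul_of_nonneg_left hx2 hb0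
        _ ≤ (1/ρp) * (M ^ (3:ℝ) * um) := mul_le_mul_of_nonneg_right hb0' (by positivity)
        _ ≤ K := hKp
    have p1 : (γ-1) * ((1/ρm - 1/ρs γ) * (ρs γ ^ γ * us γ - ρm ^ γ * um)) ≤ (γ-1) * K :=
      mul_le_mul_of_nonneg_left hterm1 hε.le
    have p1' : (γ-1) * ((1/ρp - 1/ρs γ) * (ρs γ ^ γ * us γ - ρp ^ γ * up)) ≤ (γ-1) * K :=
      mul_le_mul_of_nonneg_left hterm2 hε.le
    have p2 : (um - us γ) * (ρs γ ^ (γ-1) - ρm ^ (γ-1))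
        ≤ (um - up) * (M ^ (γ-1) - (min ρm ρp) ^ (γ-1)) := by
      apply mul_le_mul (by linarith) (by linarith) (by linarith) hΔ.le
    have p3 : 0 ≤ (us γ - up) * (ρs γ ^ (γ-1) - ρp ^ (γ-1)) :=
      mul_nonneg (by linarith) (by linarith)
    have hd1 : (um - us γ)^2 ≤ (γ-1) * K + (um - up) * (M ^ (γ-1) - (min ρm ρp) ^ (γ-1)) := by
      linarith only [hE1, p1, p2, mul_nonneg hε.le (sq_nonneg (um - us γ))]
    have hd2 : (us γ - up)^2 ≤ (γ-1) * K := by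
      linarith only [hE2, p1', p3, mul_nonneg hε.le (sq_nonneg (us γ - up))]
    have hKnn : 0 ≤ (um - up) * (M ^ (γ-1) - (min ρm ρp) ^ (γ-1)) := by
      apply mul_nonneg hΔ.le
      have : (min ρm ρp) ^ (γ-1) ≤ M ^ (γ-1) :=
        Real.rpow_le_rpow hμ.le (le_trans (min_le_left _ _) hMm) hε.le
      linarith
    have hsq1 : (um - us γ)^2 < ((um - up)/2)^2 := by linarith only [hd1, hγh]
    have hsq2 : (us γ - up)^2 < ((um - up)/2)^2 := by linarith only [hd2, hγh, hKnn]
    have h1' : um - us γ < (um - up)/2 :=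
      lt_of_pow_lt_pow_left₀ 2 (by linarith : (0:ℝ) ≤ (um - up)/2) hsq1
    have h2' : us γ - up < (um - up)/2 :=
      lt_of_pow_lt_pow_left₀ 2 (by linarith : (0:ℝ) ≤ (um - up)/2) hsq2
    linarith only [h1', h2']
  -- polynomial form of the first squared RH relation
  have hE' : ∀ γ ∈ Set.Ioo (1:ℝ) γb,
      γ * (um - us γ)^2 * (ρm * ρs γ)
        = (γ-1) * (ρs γ - ρm) * (ρs γ ^ γ * us γ - ρm ^ γ * um)
          + (um - us γ) * (ρs γ ^ (γ-1) - ρm ^ (γ-1)) * (ρm * ρs γ) := by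
    intro γ hγ
    have hρs : 0 < ρs γ := by
      have h := hbig γ hγ
      have h2 : ρm ≤ max ρm ρp := le_max_left ρm ρp
      linarith
    have hc1 : ρm * ρm⁻¹ = 1 := mul_inv_cancel₀ (ne_of_gt hρm)
    have hc2 : ρs γ * (ρs γ)⁻¹ = 1 := mul_inv_cancel₀ (ne_of_gt hρs)
    linear_combination (ρm * ρs γ) * (hE γ hγ).1
      + ((γ-1) * (ρs γ ^ γ * us γ - ρm ^ γ * um) * ρs γ) * hc1
      - ((γ-1) * (ρs γ ^ γ * us γ - ρm ^ γ * um) * ρm) * hc2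
  -- Step B : the "T" quantity is eventually bounded
  have hTbd : ∃ C : ℝ, 0 < C ∧ ∀ᶠ γ in 𝓝[>] (1:ℝ),
      0 ≤ (γ-1) * ρs γ ^ γ * us γ ∧ (γ-1) * ρs γ ^ γ * us γ ≤ C := by
    refine ⟨2*ρm*(3*(um-up)^2) + 4*((max 1 ρm)^(3:ℝ)*um) + 1, by positivity, ?_⟩
    filter_upwards [hIoo, hA.eventually_ge_atTop (2*ρm)] with γ hγin hρs2m
    have hE1' := hE' γ hγin
    obtain ⟨hu1, hu2⟩ := hmid γ hγin
    have hγ1 : 1 < γ := hγin.1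
    have hγ3 : γ ≤ 3 := le_trans hγin.2.le hγb3
    have hε : 0 < γ - 1 := by linarith
    have hρspos : 0 < ρs γ := by linarith
    have husp : 0 < us γ := hup.trans hu1
    have hρsγpos : 0 < ρs γ ^ γ := Real.rpow_pos_of_pos hρspos γ
    have hρmγpos : 0 < ρm ^ γ := Real.rpow_pos_of_pos hρm γ
    have hPmlb : ρm ^ (γ-1) ≤ ρs γ ^ (γ-1) :=
      Real.rpow_le_rpow hρm.le (by linarith) hε.le
    constructor
    · exact mul_nonneg (mul_nonneg hε.le hρsγpos.le) husp.le
    have q1 : (γ-1) * ((ρs γ/2) * (ρs γ ^ γ * us γ))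
        ≤ (γ-1) * ((ρs γ - ρm) * (ρs γ ^ γ * us γ)) := by
      apply mul_le_mul_of_nonneg_left _ hε.le
      apply mul_le_mul_of_nonneg_right (by linarith) (mul_nonneg hρsγpos.le husp.le)
    have q2 : 0 ≤ (um - us γ) * (ρs γ ^ (γ-1) - ρm ^ (γ-1)) * (ρm * ρs γ) := by
      apply mul_nonneg (mul_nonneg (by linarith) (by linarith))
      positivity
    have q3 : (γ-1) * ((ρs γ - ρm) * (ρm ^ γ * um)) ≤ (γ-1) * (ρs γ * (ρm ^ γ * um)) := by
      apply mul_le_mul_of_nonneg_left _ hε.le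
      apply mul_le_mul_of_nonneg_right (by linarith) (mul_nonneg hρmγpos.le hum.le)
    have hYρ : (γ-1) * ρs γ ^ γ * us γ * ρs γ
        ≤ (2*ρm*(γ*(um - us γ)^2) + 2*((γ-1)*(ρm ^ γ * um))) * ρs γ := by
      linarith only [hE1', q1, q2, q3]
    have hT1 : (γ-1) * ρs γ ^ γ * us γ ≤ 2*ρm*(γ*(um - us γ)^2) + 2*((γ-1)*(ρm ^ γ * um)) :=
      le_of_mul_le_mul_right hYρ hρspos
    have w5 : γ*(um - us γ)^2 ≤ 3*(um - up)^2 := by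
      have h1 : (um - us γ)^2 ≤ (um - up)^2 :=
        pow_le_pow_left₀ (by linarith) (by linarith) 2
      nlinarith [sq_nonneg (um - us γ)]
    have w6 : ρm ^ γ ≤ (max 1 ρm) ^ (3:ℝ) :=
      le_trans (Real.rpow_le_rpow hρm.le (le_max_right 1 ρm) (by linarith))
        (Real.rpow_le_rpow_of_exponent_le (le_max_left 1 ρm) hγ3)
    have w7 : (γ-1)*(ρm ^ γ * um) ≤ 2*((max 1 ρm)^(3:ℝ)*um) := by
      apply mul_le_mul (by linarith) (mul_le_mul_of_nonneg_right w6 hum.le)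
        (mul_nonneg hρmγpos.le hum.le) (by norm_num)
    have w8 : 2*ρm*(γ*(um - us γ)^2) ≤ 2*ρm*(3*(um - up)^2) :=
      mul_le_mul_of_nonneg_left w5 (by positivity)
    linarith only [hT1, w7, w8]
  -- Step B' : ρs γ ^ (γ-1) → 1
  have hP : Tendsto (fun γ => ρs γ ^ (γ-1)) (𝓝[>] (1:ℝ)) (𝓝 1) := by
    obtain ⟨C, hCpos, hCev⟩ := hTbd
    have hC' : (0:ℝ) < C/up + 1 := by positivity
    apply tendsto_of_tendsto_of_tendsto_of_le_of_le' tendsto_const_nhds (aux_pow_self15 _ hC')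
    · filter_upwards [hA.eventually_ge_atTop 1, hIoo] with γ h1 hγin
      calc (1:ℝ) = 1 ^ (γ-1) := (Real.one_rpow _).symm
        _ ≤ ρs γ ^ (γ-1) := Real.rpow_le_rpow zero_le_one h1 (by linarith [hγin.1])
    · filter_upwards [hCev, hIoo, hA.eventually_ge_atTop 1] with γ hC hγin h1
      have hε : 0 < γ - 1 := by linarith [hγin.1]
      have hρspos : (0:ℝ) < ρs γ := by linarith
      obtain ⟨hu1, hu2⟩ := hmid γ hγin
      have hr : ρs γ ≤ ρs γ ^ γ := by
        calc ρs γ = ρs γ ^ (1:ℝ) := (Real.rpow_one _).symm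
          _ ≤ ρs γ ^ γ := Real.rpow_le_rpow_of_exponent_le h1 (by linarith [hγin.1])
      have h2 : (γ-1) * ρs γ * up ≤ C := by
        calc (γ-1) * ρs γ * up ≤ (γ-1) * ρs γ ^ γ * us γ :=
              mul_le_mul (mul_le_mul_of_nonneg_left hr hε.le) hu1.le hup.le
                (by positivity)
          _ ≤ C := hC.2
      have h4 : (γ-1) * ρs γ ≤ C/up := by
        rw [le_div_iff₀ hup]
        exact h2
      have h3 : ρs γ ≤ (C/up + 1)/(γ-1) := by
        rw [le_div_iff₀ hε]
        nlinarith [h4]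
      exact Real.rpow_le_rpow hρspos.le h3 hε.le
  -- polynomial form of the second squared RH relation
  have hE2' : ∀ γ ∈ Set.Ioo (1:ℝ) γb,
      γ * (us γ - up)^2 * (ρp * ρs γ)
        = (γ-1) * (ρs γ - ρp) * (ρs γ ^ γ * us γ - ρp ^ γ * up)
          - (us γ - up) * (ρs γ ^ (γ-1) - ρp ^ (γ-1)) * (ρp * ρs γ) := by
    intro γ hγ
    have hρs : 0 < ρs γ := by
      have h := hbig γ hγ
      have h2 : ρm ≤ max ρm ρp := le_max_left ρm ρp
      linarith
    have hc1 : ρp * ρp⁻¹ = 1 := mul_inv_cancel₀ (ne_of_gt hρp)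
    have hc2 : ρs γ * (ρs γ)⁻¹ = 1 := mul_inv_cancel₀ (ne_of_gt hρs)
    linear_combination (ρp * ρs γ) * (hE γ hγ).2
      + ((γ-1) * (ρs γ ^ γ * us γ - ρp ^ γ * up) * ρs γ) * hc1
      - ((γ-1) * (ρs γ ^ γ * us γ - ρp ^ γ * up) * ρp) * hc2
  -- Step C : ρm δ1² - ρp δ2² → 0
  have hg : Tendsto (fun γ => ρm * (um - us γ)^2 - ρp * (us γ - up)^2) (𝓝[>] (1:ℝ)) (𝓝 0) := by
    have hErr : Tendsto (fun γ => |ρp - ρm| * ((γ-1) * ρs γ ^ (γ-1) * um)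
        + (γ-1) * (ρm ^ γ * um + ρp ^ γ * up)
        + ρm * (um - up) * (ρs γ ^ (γ-1) - ρm ^ (γ-1))
        + ρp * (um - up) * (ρs γ ^ (γ-1) - ρp ^ (γ-1))) (𝓝[>] (1:ℝ)) (𝓝 0) := by
      have t1 : Tendsto (fun γ => |ρp - ρm| * ((γ-1) * ρs γ ^ (γ-1) * um))
          (𝓝[>] (1:ℝ)) (𝓝 0) := by
        have h := ((aux_eps15'.mul hP).mul_const um).const_mul |ρp - ρm|
        norm_num at h
        exact h
      have t2 : Tendsto (fun γ => (γ-1) * (ρm ^ γ * um + ρp ^ γ * up))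
          (𝓝[>] (1:ℝ)) (𝓝 0) := by
        have h := aux_eps15'.mul
          (((aux_crpow15' ρm hρm).mul_const um).add ((aux_crpow15' ρp hρp).mul_const up))
        norm_num at h
        exact h
      have t3 : Tendsto (fun γ => ρm * (um - up) * (ρs γ ^ (γ-1) - ρm ^ (γ-1)))
          (𝓝[>] (1:ℝ)) (𝓝 0) := by
        have h := (hP.sub (aux_crpow15 ρm hρm)).const_mul (ρm * (um - up))
        norm_num at h
        exact h
      have t4 : Tendsto (fun γ => ρp * (um - up) * (ρs γ ^ (γ-1) - ρp ^ (γ-1)))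
          (𝓝[>] (1:ℝ)) (𝓝 0) := by
        have h := (hP.sub (aux_crpow15 ρp hρp)).const_mul (ρp * (um - up))
        norm_num at h
        exact h
      have h := ((t1.add t2).add t3).add t4
      norm_num at h
      exact h
    have hkey : ∀ᶠ γ in 𝓝[>] (1:ℝ),
        (-(|ρp - ρm| * ((γ-1) * ρs γ ^ (γ-1) * um)
          + (γ-1) * (ρm ^ γ * um + ρp ^ γ * up)
          + ρm * (um - up) * (ρs γ ^ (γ-1) - ρm ^ (γ-1))
          + ρp * (um - up) * (ρs γ ^ (γ-1) - ρp ^ (γ-1)))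
          ≤ γ * (ρm * (um - us γ)^2 - ρp * (us γ - up)^2)) ∧
        (γ * (ρm * (um - us γ)^2 - ρp * (us γ - up)^2)
          ≤ |ρp - ρm| * ((γ-1) * ρs γ ^ (γ-1) * um)
          + (γ-1) * (ρm ^ γ * um + ρp ^ γ * up)
          + ρm * (um - up) * (ρs γ ^ (γ-1) - ρm ^ (γ-1))
          + ρp * (um - up) * (ρs γ ^ (γ-1) - ρp ^ (γ-1))) := by
      filter_upwards [hIoo] with γ hγin
      have hE1' := hE' γ hγin
      have hE2'' := hE2' γ hγin
      obtain ⟨hu1, hu2⟩ := hmid γ hγin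
      have hbigγ := hbig γ hγin
      have hρsm : ρm < ρs γ := lt_of_le_of_lt (le_max_left _ _) hbigγ
      have hρsp : ρp < ρs γ := lt_of_le_of_lt (le_max_right _ _) hbigγ
      have hρspos : 0 < ρs γ := hρm.trans hρsm
      have hγ1 : 1 < γ := hγin.1
      have hε : 0 < γ - 1 := by linarith
      have husp : 0 < us γ := hup.trans hu1
      have hρsγpos : 0 < ρs γ ^ γ := Real.rpow_pos_of_pos hρspos γ
      have hρmγpos : 0 < ρm ^ γ := Real.rpow_pos_of_pos hρm γ
      have hρpγpos : 0 < ρp ^ γ := Real.rpow_pos_of_pos hρp γ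
      have hPpos : 0 < ρs γ ^ (γ-1) := Real.rpow_pos_of_pos hρspos _
      have hPmlb : ρm ^ (γ-1) ≤ ρs γ ^ (γ-1) := Real.rpow_le_rpow hρm.le hρsm.le hε.le
      have hPplb : ρp ^ (γ-1) ≤ ρs γ ^ (γ-1) := Real.rpow_le_rpow hρp.le hρsp.le hε.le
      have hsplit : ρs γ ^ γ = ρs γ ^ (γ-1) * ρs γ := by
        rw [← Real.rpow_add_one (ne_of_gt hρspos) (γ-1), sub_add_cancel]
      -- polynomial identity (†)
      have hident : γ * (ρm * (um - us γ)^2 - ρp * (us γ - up)^2) * ρs γ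
          = (γ-1) * ρs γ ^ (γ-1) * us γ * (ρp - ρm) * ρs γ
            - (γ-1) * ((ρs γ - ρm) * (ρm ^ γ * um))
            + (γ-1) * ((ρs γ - ρp) * (ρp ^ γ * up))
            + (um - us γ) * (ρs γ ^ (γ-1) - ρm ^ (γ-1)) * (ρm * ρs γ)
            + (us γ - up) * (ρs γ ^ (γ-1) - ρp ^ (γ-1)) * (ρp * ρs γ) := by
        linear_combination hE1' - hE2'' + ((γ-1) * us γ * (ρp - ρm)) * hsplit
      -- bounds for each term
      have ha : 0 ≤ (γ-1) * ρs γ ^ (γ-1) * ρs γ := by positivity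
      have r1u : (γ-1) * ρs γ ^ (γ-1) * us γ * (ρp - ρm) * ρs γ
          ≤ |ρp - ρm| * ((γ-1) * ρs γ ^ (γ-1) * um) * ρs γ := by
        have h1 : us γ * (ρp - ρm) ≤ um * |ρp - ρm| := by
          calc us γ * (ρp - ρm) ≤ us γ * |ρp - ρm| :=
                mul_le_mul_of_nonneg_left (le_abs_self _) husp.le
            _ ≤ um * |ρp - ρm| := mul_le_mul_of_nonneg_right hu2.le (abs_nonneg _)
        have h2 := mul_le_mul_of_nonneg_left h1 ha
        linarith only [h2]
      have r1l : -( |ρp - ρm| * ((γ-1) * ρs γ ^ (γ-1) * um) * ρs γ)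
          ≤ (γ-1) * ρs γ ^ (γ-1) * us γ * (ρp - ρm) * ρs γ := by
        have h1 : -(um * |ρp - ρm|) ≤ us γ * (ρp - ρm) := by
          have h1a : us γ * (-|ρp - ρm|) ≤ us γ * (ρp - ρm) :=
            mul_le_mul_of_nonneg_left (neg_abs_le _) husp.le
          have h1b : us γ * |ρp - ρm| ≤ um * |ρp - ρm| :=
            mul_le_mul_of_nonneg_right hu2.le (abs_nonneg _)
          nlinarith [h1a, h1b]
        have h2 := mul_le_mul_of_nonneg_left h1 ha
        linarith only [h2]
      have r2u : (γ-1) * ((ρs γ - ρm) * (ρm ^ γ * um)) ≤ (γ-1) * (ρm ^ γ * um) * ρs γ := by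
        have h1 : (ρs γ - ρm) * (ρm ^ γ * um) ≤ ρs γ * (ρm ^ γ * um) :=
          mul_le_mul_of_nonneg_right (by linarith) (by positivity)
        have := mul_le_mul_of_nonneg_left h1 hε.le
        linarith only [this]
      have r2l : 0 ≤ (γ-1) * ((ρs γ - ρm) * (ρm ^ γ * um)) := by
        apply mul_nonneg hε.le
        apply mul_nonneg (by linarith) (by positivity)
      have r3u : (γ-1) * ((ρs γ - ρp) * (ρp ^ γ * up)) ≤ (γ-1) * (ρp ^ γ * up) * ρs γ := by
        have h1 : (ρs γ - ρp) * (ρp ^ γ * up) ≤ ρs γ * (ρp ^ γ * up) :=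
          mul_le_mul_of_nonneg_right (by linarith) (by positivity)
        have := mul_le_mul_of_nonneg_left h1 hε.le
        linarith only [this]
      have r3l : 0 ≤ (γ-1) * ((ρs γ - ρp) * (ρp ^ γ * up)) := by
        apply mul_nonneg hε.le
        apply mul_nonneg (by linarith) (by positivity)
      have r4u : (um - us γ) * (ρs γ ^ (γ-1) - ρm ^ (γ-1)) * (ρm * ρs γ)
          ≤ (um - up) * (ρs γ ^ (γ-1) - ρm ^ (γ-1)) * (ρm * ρs γ) := by
        apply mul_le_mul_of_nonneg_right _ (by positivity)
        apply mul_le_mul_of_nonneg_right (by linarith) (by linarith)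
      have r4l : 0 ≤ (um - us γ) * (ρs γ ^ (γ-1) - ρm ^ (γ-1)) * (ρm * ρs γ) := by
        apply mul_nonneg (mul_nonneg (by linarith) (by linarith)) (by positivity)
      have r5u : (us γ - up) * (ρs γ ^ (γ-1) - ρp ^ (γ-1)) * (ρp * ρs γ)
          ≤ (um - up) * (ρs γ ^ (γ-1) - ρp ^ (γ-1)) * (ρp * ρs γ) := by
        apply mul_le_mul_of_nonneg_right _ (by positivity)
        apply mul_le_mul_of_nonneg_right (by linarith) (by linarith)
      have r5l : 0 ≤ (us γ - up) * (ρs γ ^ (γ-1) - ρp ^ (γ-1)) * (ρp * ρs γ) := by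
        apply mul_nonneg (mul_nonneg (by linarith) (by linarith)) (by positivity)
      have herrnn : 0 ≤ |ρp - ρm| * ((γ-1) * ρs γ ^ (γ-1) * um) * ρs γ := by positivity
      have e1nn : 0 ≤ (γ-1) * (ρm ^ γ * um) * ρs γ := by positivity
      have e2nn : 0 ≤ (γ-1) * (ρp ^ γ * up) * ρs γ := by positivity
      have e3nn : 0 ≤ (um - up) * (ρs γ ^ (γ-1) - ρm ^ (γ-1)) * (ρm * ρs γ) := by
        apply mul_nonneg (mul_nonneg (by linarith) (by linarith)) (by positivity)
      have e4nn : 0 ≤ (um - up) * (ρs γ ^ (γ-1) - ρp ^ (γ-1)) * (ρp * ρs γ) := by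
        apply mul_nonneg (mul_nonneg (by linarith) (by linarith)) (by positivity)
      constructor
      · have hup' : γ * (ρm * (um - us γ)^2 - ρp * (us γ - up)^2) * ρs γ
            ≥ (-(|ρp - ρm| * ((γ-1) * ρs γ ^ (γ-1) * um)
              + (γ-1) * (ρm ^ γ * um + ρp ^ γ * up)
              + ρm * (um - up) * (ρs γ ^ (γ-1) - ρm ^ (γ-1))
              + ρp * (um - up) * (ρs γ ^ (γ-1) - ρp ^ (γ-1)))) * ρs γ := by
          linarith only [hident, r1l, r2u, r3l, r4l, r5l, e2nn, e3nn, e4nn]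
        exact le_of_mul_le_mul_right (by linarith [hup']) hρspos
      · have hup' : γ * (ρm * (um - us γ)^2 - ρp * (us γ - up)^2) * ρs γ
            ≤ (|ρp - ρm| * ((γ-1) * ρs γ ^ (γ-1) * um)
              + (γ-1) * (ρm ^ γ * um + ρp ^ γ * up)
              + ρm * (um - up) * (ρs γ ^ (γ-1) - ρm ^ (γ-1))
              + ρp * (um - up) * (ρs γ ^ (γ-1) - ρp ^ (γ-1))) * ρs γ := by
          linarith only [hident, r1u, r2l, r3u, r4u, r5u, e1nn]
        exact le_of_mul_le_mul_right hup' hρspos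
    have hγg : Tendsto (fun γ => γ * (ρm * (um - us γ)^2 - ρp * (us γ - up)^2))
        (𝓝[>] (1:ℝ)) (𝓝 0) := by
      have hErrn := hErr.neg
      norm_num at hErrn
      apply tendsto_of_tendsto_of_tendsto_of_le_of_le' hErrn hErr
      · filter_upwards [hkey] with γ h
        linarith [h.1]
      · filter_upwards [hkey] with γ h
        exact h.2
    have hinv : Tendsto (fun γ : ℝ => γ⁻¹) (𝓝[>] (1:ℝ)) (𝓝 1) := by
      have h := aux_id15.inv₀ one_ne_zero
      norm_num at h
      exact h
    have h := hγg.mul hinv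
    norm_num at h
    refine h.congr' ?_
    filter_upwards [hIoo] with γ hγin
    have hγne : γ ≠ 0 := by
      have := hγin.1
      intro hh
      rw [hh] at this
      linarith
    field_simp
  -- Step D : us → σ
  have hus : Tendsto us (𝓝[>] (1:ℝ)) (𝓝 σ) := by
    have hkey0 : Real.sqrt ρm * (um - σ) = Real.sqrt ρp * (σ - up) := by
      rw [hσdef]
      field_simp
      ring
    have hfσ : ρm * (um - σ)^2 - ρp * (σ - up)^2 = 0 := by
      linear_combination (Real.sqrt ρm * (um - σ) + Real.sqrt ρp * (σ - up)) * hkey0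
        - (um - σ)^2 * ham + (σ - up)^2 * hap
    have hD : (0:ℝ) < 2 * (min ρm ρp) * (um - up) := by
      apply mul_pos (by positivity)
      linarith
    have habs : Tendsto (fun γ => |ρm * (um - us γ)^2 - ρp * (us γ - up)^2|)
        (𝓝[>] (1:ℝ)) (𝓝 0) := by
      have h := hg.abs
      norm_num at h
      exact h
    have hlowf : Tendsto (fun γ => σ - |ρm * (um - us γ)^2 - ρp * (us γ - up)^2|
        / (2 * (min ρm ρp) * (um - up))) (𝓝[>] (1:ℝ)) (𝓝 σ) := by
      have h := (tendsto_const_nhds (x := σ) (f := 𝓝[>] (1:ℝ))).sub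
        (habs.div_const (2 * (min ρm ρp) * (um - up)))
      norm_num at h
      exact h
    have hupf : Tendsto (fun γ => σ + |ρm * (um - us γ)^2 - ρp * (us γ - up)^2|
        / (2 * (min ρm ρp) * (um - up))) (𝓝[>] (1:ℝ)) (𝓝 σ) := by
      have h := (tendsto_const_nhds (x := σ) (f := 𝓝[>] (1:ℝ))).add
        (habs.div_const (2 * (min ρm ρp) * (um - up)))
      norm_num at h
      exact h
    apply tendsto_of_tendsto_of_tendsto_of_le_of_le' hlowf hupf
    · filter_upwards [hIoo] with γ hγin
      obtain ⟨hu1, hu2⟩ := hmid γ hγin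
      have hfac : ρm * (um - us γ)^2 - ρp * (us γ - up)^2
          = (σ - us γ) * (ρm * (2*um - us γ - σ) + ρp * (us γ + σ - 2*up)) := by
        linear_combination hfσ
      have p := mul_nonneg (by linarith [min_le_left ρm ρp] : (0:ℝ) ≤ ρm - min ρm ρp)
        (by linarith : (0:ℝ) ≤ 2*um - us γ - σ)
      have q := mul_nonneg (by linarith [min_le_right ρm ρp] : (0:ℝ) ≤ ρp - min ρm ρp)
        (by linarith : (0:ℝ) ≤ us γ + σ - 2*up)
      have hbr : 2 * (min ρm ρp) * (um - up)
          ≤ ρm * (2*um - us γ - σ) + ρp * (us γ + σ - 2*up) := by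
        linarith only [p, q]
      have h1 : (σ - us γ) * (2 * (min ρm ρp) * (um - up))
          ≤ |ρm * (um - us γ)^2 - ρp * (us γ - up)^2| := by
        rcases le_or_gt σ (us γ) with hc | hc
        · have h2 : 0 ≤ (us γ - σ) * (2 * (min ρm ρp) * (um - up)) :=
            mul_nonneg (by linarith) hD.le
          have h3 := abs_nonneg (ρm * (um - us γ)^2 - ρp * (us γ - up)^2)
          nlinarith [h2, h3]
        · calc (σ - us γ) * (2 * (min ρm ρp) * (um - up))
              ≤ (σ - us γ) * (ρm * (2*um - us γ - σ) + ρp * (us γ + σ - 2*up)) :=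
                mul_le_mul_of_nonneg_left hbr (by linarith)
            _ = ρm * (um - us γ)^2 - ρp * (us γ - up)^2 := hfac.symm
            _ ≤ |ρm * (um - us γ)^2 - ρp * (us γ - up)^2| := le_abs_self _
      have h2 : σ - us γ ≤ |ρm * (um - us γ)^2 - ρp * (us γ - up)^2|
          / (2 * (min ρm ρp) * (um - up)) := (le_div_iff₀ hD).mpr h1
      linarith
    · filter_upwards [hIoo] with γ hγin
      obtain ⟨hu1, hu2⟩ := hmid γ hγin
      have hfac : ρm * (um - us γ)^2 - ρp * (us γ - up)^2
          = (σ - us γ) * (ρm * (2*um - us γ - σ) + ρp * (us γ + σ - 2*up)) := by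
        linear_combination hfσ
      have p := mul_nonneg (by linarith [min_le_left ρm ρp] : (0:ℝ) ≤ ρm - min ρm ρp)
        (by linarith : (0:ℝ) ≤ 2*um - us γ - σ)
      have q := mul_nonneg (by linarith [min_le_right ρm ρp] : (0:ℝ) ≤ ρp - min ρm ρp)
        (by linarith : (0:ℝ) ≤ us γ + σ - 2*up)
      have hbr : 2 * (min ρm ρp) * (um - up)
          ≤ ρm * (2*um - us γ - σ) + ρp * (us γ + σ - 2*up) := by
        linarith only [p, q]
      have h1 : (us γ - σ) * (2 * (min ρm ρp) * (um - up))
          ≤ |ρm * (um - us γ)^2 - ρp * (us γ - up)^2| := by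
        rcases le_or_gt (us γ) σ with hc | hc
        · have h2 : 0 ≤ (σ - us γ) * (2 * (min ρm ρp) * (um - up)) :=
            mul_nonneg (by linarith) hD.le
          have h3 := abs_nonneg (ρm * (um - us γ)^2 - ρp * (us γ - up)^2)
          nlinarith [h2, h3]
        · calc (us γ - σ) * (2 * (min ρm ρp) * (um - up))
              ≤ (us γ - σ) * (ρm * (2*um - us γ - σ) + ρp * (us γ + σ - 2*up)) :=
                mul_le_mul_of_nonneg_left hbr (by linarith)
            _ = -(ρm * (um - us γ)^2 - ρp * (us γ - up)^2) := by
                rw [hfac]; ring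
            _ ≤ |ρm * (um - us γ)^2 - ρp * (us γ - up)^2| := neg_le_abs _
      have h2 : us γ - σ ≤ |ρm * (um - us γ)^2 - ρp * (us γ - up)^2|
          / (2 * (min ρm ρp) * (um - up)) := (le_div_iff₀ hD).mpr h1
      linarith
  -- Step E : assemble
  have hinv : Tendsto (fun γ => (ρs γ)⁻¹) (𝓝[>] (1:ℝ)) (𝓝 0) := hA.inv_tendsto_atTop
  have hmain : Tendsto (fun γ =>
      ρs γ * ((ρp * up - ρs γ * us γ) / (ρp - ρs γ) - (ρs γ * us γ - ρm * um) / (ρs γ - ρm)))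
      (𝓝[>] (1:ℝ)) (𝓝 (σ * (ρp - ρm) - (ρp * up - ρm * um))) := by
    have t1 : Tendsto (fun γ => ρp * (us γ - up)) (𝓝[>] (1:ℝ)) (𝓝 (ρp * (σ - up))) :=
      ((hus.sub_const up).const_mul ρp)
    have t2 : Tendsto (fun γ => 1 - ρp * (ρs γ)⁻¹) (𝓝[>] (1:ℝ)) (𝓝 1) := by
      have h := (tendsto_const_nhds (x := (1:ℝ)) (f := 𝓝[>] (1:ℝ))).sub (hinv.const_mul ρp)
      norm_num at h
      exact h
    have t3 : Tendsto (fun γ => ρm * (us γ - um)) (𝓝[>] (1:ℝ)) (𝓝 (ρm * (σ - um))) :=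
      ((hus.sub_const um).const_mul ρm)
    have t4 : Tendsto (fun γ => 1 - ρm * (ρs γ)⁻¹) (𝓝[>] (1:ℝ)) (𝓝 1) := by
      have h := (tendsto_const_nhds (x := (1:ℝ)) (f := 𝓝[>] (1:ℝ))).sub (hinv.const_mul ρm)
      norm_num at h
      exact h
    have hlim0 := (t1.mul (t2.inv₀ one_ne_zero)).sub (t3.mul (t4.inv₀ one_ne_zero))
    have heq : ρp * (σ - up) * (1:ℝ)⁻¹ - ρm * (σ - um) * (1:ℝ)⁻¹
        = σ * (ρp - ρm) - (ρp * up - ρm * um) := by norm_num; ring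
    rw [heq] at hlim0
    refine hlim0.congr' ?_
    filter_upwards [hIoo] with γ hγin
    have hbigγ := hbig γ hγin
    have hρsm : ρm < ρs γ := lt_of_le_of_lt (le_max_left _ _) hbigγ
    have hρsp : ρp < ρs γ := lt_of_le_of_lt (le_max_right _ _) hbigγ
    have hρspos : 0 < ρs γ := hρm.trans hρsm
    have h1 : ρs γ ≠ 0 := ne_of_gt hρspos
    have h2 : ρs γ - ρm ≠ 0 := sub_ne_zero.2 (ne_of_gt hρsm)
    have h2' : ρm - ρs γ ≠ 0 := sub_ne_zero.2 (ne_of_lt hρsm)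
    have h3 : ρp - ρs γ ≠ 0 := sub_ne_zero.2 (ne_of_lt hρsp)
    have h3' : ρs γ - ρp ≠ 0 := sub_ne_zero.2 (ne_of_gt hρsp)
    field_simp
    ring
  refine ⟨?_, hmain, hid⟩
  apply Tendsto.congr _ hmain
  intro γ
  rw [intervalIntegral.integral_const, smul_eq_mul]
  ring
end
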